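/- arXiv:2012.09848 — 8 statements merged into one kernel-verified Lean document; each statement's English description precedes it below -/
import Mathlib

section
/- Let (X,d) be a proper metric space and let γ, σ : [0,∞) → X be two geodesic rays. Then γ and σ are strongly asymptotic (i.e. there exist T ≥ 0 and S ≥ 0 with lim_{t→∞} d(γ(t+T), σ(t+S)) = 0) if and only if lim_{t→∞} inf_{s≥0} d(γ(t), σ(s)) = 0. -/
open Filter Metric Topology

/-- A geodesic ray: `d(γ s, γ t) = |s - t|` for all `s, t ≥ 0`. -/
def IsGeodesicRay {X : Type*} [MetricSpace X] (γ : ℝ → X) : Prop :=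
  ∀ s t : ℝ, 0 ≤ s → 0 ≤ t → dist (γ s) (γ t) = |s - t|

/-- A geodesic metric space: any two points are joined by a geodesic segment. -/
def IsGeodesicSpace (X : Type*) [MetricSpace X] : Prop :=
  ∀ x y : X, ∃ γ : ℝ → X, γ 0 = x ∧ γ (dist x y) = y ∧
    ∀ s ∈ Set.Icc (0 : ℝ) (dist x y), ∀ t ∈ Set.Icc (0 : ℝ) (dist x y),
      dist (γ s) (γ t) = |s - t|

/-- The Gromov product `(x|y)_p = (d(x,p) + d(y,p) - d(x,y))/2`. -/
noncomputable def gromovProduct {X : Type*} [MetricSpace X] (p x y : X) : ℝ :=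
  (dist x p + dist y p - dist x y) / 2

/-- `δ`-hyperbolicity: `(x|y)_p ≥ min((x|z)_p, (z|y)_p) - δ` for all `x, y, z, p`. -/
def IsDeltaHyperbolic (X : Type*) [MetricSpace X] (δ : ℝ) : Prop :=
  ∀ p x y z : X, min (gromovProduct p x z) (gromovProduct p z y) - δ ≤ gromovProduct p x y

/-- Two geodesic rays are strongly asymptotic if `d(γ(t+T), σ(t+S)) → 0` for
some `T, S ≥ 0`. -/
def StronglyAsymptotic {X : Type*} [MetricSpace X] (γ σ : ℝ → X) : Prop :=
  ∃ T S : ℝ, 0 ≤ T ∧ 0 ≤ S ∧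
    Tendsto (fun t => dist (γ (t + T)) (σ (t + S))) atTop (nhds 0)

/-- Two geodesic rays are asymptotic if `sup_{t ≥ 0} d(γ t, σ t) < ∞`. -/
def AsymptoticRays {X : Type*} [MetricSpace X] (γ σ : ℝ → X) : Prop :=
  ∃ M : ℝ, ∀ t : ℝ, 0 ≤ t → dist (γ t) (σ t) ≤ M

/-- A space has approaching geodesics if asymptotic geodesic rays are strongly
asymptotic. -/
def ApproachingGeodesics (X : Type*) [MetricSpace X] : Prop :=
  ∀ γ σ : ℝ → X, IsGeodesicRay γ → IsGeodesicRay σ →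
    AsymptoticRays γ σ → StronglyAsymptotic γ σ

/-- The geodesic region of radius `R` around the ray `γ`. -/
def geodesicRegion {X : Type*} [MetricSpace X] (γ : ℝ → X) (R : ℝ) : Set X :=
  {x | ∃ t : ℝ, 0 ≤ t ∧ dist x (γ t) < R}

/-- In a proper metric space, two geodesic rays are strongly
asymptotic iff lim_{t→∞} inf_{s ≥ 0} d(γ t, σ s) = 0. -/
theorem stronglyAsymptotic_iff_inf_dist_tendsto_zero {X : Type*} [MetricSpace X]
    [ProperSpace X] (γ σ : ℝ → X) (hγ : IsGeodesicRay γ) (hσ : IsGeodesicRay σ) :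
    StronglyAsymptotic γ σ ↔
      Tendsto (fun t => ⨅ s : {s : ℝ // 0 ≤ s}, dist (γ t) (σ s.1)) atTop (nhds 0) := by
  unfold StronglyAsymptotic
  have hbdd : ∀ t : ℝ, BddBelow (Set.range fun s : {s : ℝ // 0 ≤ s} => dist (γ t) (σ s.1)) := by
    intro t
    exact ⟨0, by rintro _ ⟨s, rfl⟩; exact dist_nonneg⟩
  constructor
  · rintro ⟨T, S, hT, hS, h⟩
    apply squeeze_zero' (g := fun t => dist (γ t) (σ (t - T + S)))
    · exact Eventually.of_forall fun t => le_ciInf fun s => dist_nonneg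
    · filter_upwards [eventually_ge_atTop T] with t ht
      exact ciInf_le (hbdd t) ⟨t - T + S, by linarith⟩
    · have h2 : Tendsto (fun t : ℝ => t - T) atTop atTop :=
        tendsto_atTop_add_const_right atTop (-T) tendsto_id
      exact (h.comp h2).congr fun t => by simp [Function.comp, sub_add_cancel]
  · intro hf
    set f : ℝ → ℝ := fun t => ⨅ s : {s : ℝ // 0 ≤ s}, dist (γ t) (σ s.1) with hfdef
    haveI : Nonempty {s : ℝ // 0 ≤ s} := ⟨⟨0, le_refl 0⟩⟩
    have hex : ∀ t : ℝ, ∃ s : {s : ℝ // 0 ≤ s}, dist (γ t) (σ s.1) < f t + Real.exp (-t) :=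
      fun t => exists_lt_of_ciInf_lt (lt_add_of_pos_right _ (Real.exp_pos _))
    choose s hs using hex
    set g : ℝ → ℝ := fun t => dist (γ t) (σ (s t).1) with hgdef
    have hg0 : Tendsto g atTop (nhds 0) := by
      apply squeeze_zero' (g := fun t => f t + Real.exp (-t))
      · exact Eventually.of_forall fun t => dist_nonneg
      · exact Eventually.of_forall fun t => (hs t).le
      · simpa using hf.add Real.tendsto_exp_neg_atTop_nhds_zero
    have hgnn : ∀ t, 0 ≤ g t := fun t => dist_nonneg
    have hkey : ∀ t t' : ℝ, 0 ≤ t → 0 ≤ t' →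
        |(|t - t'| - |(s t).1 - (s t').1|)| ≤ g t + g t' := by
      intro t t' ht ht'
      have h1 := dist_dist_dist_le (γ t) (γ t') (σ (s t).1) (σ (s t').1)
      rwa [hγ t t' ht ht', hσ (s t).1 (s t').1 (s t).2 (s t').2, Real.dist_eq] at h1
    -- the "drift" c t = s t - t is Cauchy
    set c : ℝ → ℝ := fun t => (s t).1 - t with hcdef
    have hcauchy : CauchySeq c := by
      rw [Metric.cauchySeq_iff]
      intro ε hε
      obtain ⟨N₁, hN₁⟩ := (Metric.tendsto_atTop.mp hg0) (min (ε / 8) (1 / 4))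
        (lt_min (by linarith) (by norm_num))
      have hgsmall : ∀ t ≥ max N₁ 0, g t < min (ε / 8) (1 / 4) := by
        intro t ht
        have := hN₁ t (le_trans (le_max_left _ _) ht)
        rwa [Real.dist_eq, sub_zero, abs_of_nonneg (hgnn t)] at this
      set t₀ : ℝ := max N₁ 0 with ht₀def
      have ht₀0 : (0:ℝ) ≤ t₀ := le_max_right _ _
      have hclose : ∀ t ≥ t₀ + (s t₀).1 + 1, |c t - c t₀| ≤ g t + g t₀ := by
        intro t ht
        have ht0 : (0:ℝ) ≤ t := by have := (s t₀).2; linarith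
        have hk := hkey t t₀ ht0 ht₀0
        have htt : t - t₀ = |t - t₀| := (abs_of_nonneg (by have := (s t₀).2; linarith)).symm
        have hgt : g t < 1/4 := lt_of_lt_of_le (hgsmall t (by have := (s t₀).2; linarith [le_max_left N₁ (0:ℝ)]
          )) (min_le_right _ _)
        have hgt₀ : g t₀ < 1/4 := lt_of_lt_of_le (hgsmall t₀ le_rfl) (min_le_right _ _)
        rw [← htt] at hk
        rw [abs_le] at hk ⊢
        have hst := (s t).2
        have hst₀ := (s t₀).2
        rcases abs_cases ((s t).1 - (s t₀).1) with ⟨he, _⟩ | ⟨he, hneg⟩ <;>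
          rw [he] at hk <;>
          constructor <;> simp only [hcdef] <;> nlinarith [hk.1, hk.2]
      refine ⟨t₀ + (s t₀).1 + 1, fun m hm n hn => ?_⟩
      have h1 := hclose m hm
      have h2 := hclose n hn
      have hm0 : m ≥ t₀ := by have := (s t₀).2; linarith
      have hn0 : n ≥ t₀ := by have := (s t₀).2; linarith
      have hgm : g m < ε / 8 := lt_of_lt_of_le (hgsmall m hm0) (min_le_left _ _)
      have hgn : g n < ε / 8 := lt_of_lt_of_le (hgsmall n hn0) (min_le_left _ _)
      have hgt₀ : g t₀ < ε / 8 := lt_of_lt_of_le (hgsmall t₀ le_rfl) (min_le_left _ _)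
      rw [Real.dist_eq]
      calc |c m - c n| ≤ |c m - c t₀| + |c n - c t₀| := by
            rw [abs_sub_comm (c n) (c t₀)] ; exact abs_sub_le _ _ _
        _ < ε := by linarith
    obtain ⟨L, hL⟩ := cauchySeq_tendsto_of_complete hcauchy
    -- main limit: dist (γ t) (σ (t + L)) → 0
    have habs : Tendsto (fun t => |c t - L|) atTop (nhds 0) := by
      simpa using (hL.sub_const L).abs
    have hmain : Tendsto (fun t => dist (γ t) (σ (t + L))) atTop (nhds 0) := by
      apply squeeze_zero' (g := fun t => g t + |c t - L|)
      · exact Eventually.of_forall fun t => dist_nonneg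
      · filter_upwards [eventually_ge_atTop (max 0 (-L))] with t ht
        have htL : 0 ≤ t + L := by
          have := le_trans (le_max_right 0 (-L)) ht; linarith
        have := dist_triangle (γ t) (σ (s t).1) (σ (t + L))
        have heq : dist (σ (s t).1) (σ (t + L)) = |c t - L| := by
          rw [hσ (s t).1 (t + L) (s t).2 htL]
          congr 1
          simp [hcdef]; ring
        linarith [this, heq.le, heq.ge]
      · simpa using hg0.add habs
    rcases le_or_gt 0 L with hL0 | hL0
    · exact ⟨0, L, le_refl 0, hL0, by simpa using hmain⟩
    · refine ⟨-L, 0, by linarith, le_refl 0, ?_⟩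
      have h2 : Tendsto (fun t : ℝ => t - L) atTop atTop :=
        tendsto_atTop_add_const_right atTop (-L) tendsto_id
      have := hmain.comp h2
      refine this.congr fun t => ?_
      simp [Function.comp, sub_add_cancel, sub_eq_add_neg]
end

section
/- Let (X,d) be a proper geodesic metric space which is δ-hyperbolic for some δ ≥ 0, i.e. (x|y)_p ≥ min{(x|z)_p, (z|y)_p} − δ for all x,y,z,p ∈ X, where (x|y)_p := (d(x,p)+d(y,p)−d(x,y))/2. Let γ be a geodesic ray such that any two geodesic rays each asymptotic to γ are strongly asymptotic to each other. Let p, z ∈ X and let (w_n) be a sequence in X converging to the boundary point of γ, meaning that for every C > 0 there exists N such that (w_n | γ(m))_p ≥ C for all n, m ≥ N. Then lim_{n→∞} ( d(z,w_n) − d(w_n,p) ) = B_γ(z,p). -/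
open Filter Metric Topology

lemma gp_le_dist {X : Type*} [MetricSpace X] (b x y : X) :
    gromovProduct b x y ≤ dist x b := by
  have h := dist_triangle y x b
  have h2 := dist_comm x y
  unfold gromovProduct
  linarith [dist_comm y x ▸ h]

lemma gp_base {X : Type*} [MetricSpace X] (p b x y : X) :
    gromovProduct p x y - dist p b ≤ gromovProduct b x y := by
  have h1 := dist_triangle x b p
  have h2 := dist_triangle y b p
  have h3 := dist_comm p b
  unfold gromovProduct
  linarith

lemma tendsto_shift {f : ℝ → ℝ} {T : ℝ} {l : Filter ℝ}
    (h : Tendsto (fun t => f (t + T)) atTop l) : Tendsto f atTop l := by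
  have h2 : Tendsto (fun u : ℝ => u - T) atTop atTop :=
    tendsto_atTop_add_const_right _ (-T) tendsto_id
  have h3 := h.comp h2
  refine h3.congr fun u => ?_
  simp [Function.comp, sub_add_cancel]

/-- Transfer of the Busemann limit along strongly asymptotic rays. -/
lemma busemann_transfer {X : Type*} [MetricSpace X] {γ σ : ℝ → X} {p z : X} {B : ℝ}
    (hB : Tendsto (fun t => dist z (γ t) - dist (γ t) p) atTop (𝓝 B))
    (hsa : StronglyAsymptotic σ γ) :
    Tendsto (fun t => dist z (σ t) - dist (σ t) p) atTop (𝓝 B) := by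
  obtain ⟨T, S, _, _, hd⟩ := hsa
  have hγ' : Tendsto (fun t => dist z (γ (t + S)) - dist (γ (t + S)) p) atTop (𝓝 B) := by
    have hshift : Tendsto (fun t : ℝ => t + S) atTop atTop :=
      tendsto_atTop_add_const_right _ S tendsto_id
    exact hB.comp hshift
  have h0 : Tendsto (fun t => (dist z (σ (t + T)) - dist (σ (t + T)) p) -
      (dist z (γ (t + S)) - dist (γ (t + S)) p)) atTop (𝓝 0) := by
    apply squeeze_zero_norm (a := fun t => 2 * dist (σ (t + T)) (γ (t + S)))
    · intro t
      have h1 : |dist z (σ (t + T)) - dist z (γ (t + S))| ≤ dist (σ (t + T)) (γ (t + S)) := by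
        rw [dist_comm z (σ (t + T)), dist_comm z (γ (t + S))]
        exact abs_dist_sub_le _ _ _
      have h2 : |dist (σ (t + T)) p - dist (γ (t + S)) p| ≤ dist (σ (t + T)) (γ (t + S)) :=
        abs_dist_sub_le _ _ _
      rw [Real.norm_eq_abs]
      rw [abs_le] at h1 h2 ⊢
      constructor <;> linarith [h1.1, h1.2, h2.1, h2.2]
    · simpa using hd.const_mul 2
  have key : Tendsto (fun t => dist z (σ (t + T)) - dist (σ (t + T)) p) atTop (𝓝 B) := by
    have := h0.add hγ'
    simpa using this
  exact tendsto_shift key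

/-- Arzelà–Ascoli style extraction of a limit geodesic ray. -/
lemma exists_limit_ray {X : Type*} [MetricSpace X] [ProperSpace X]
    (b : X) (v : ℕ → ℝ → X) (T : ℕ → ℝ)
    (hv : ∀ n s t, dist (v n s) (v n t) ≤ |s - t|)
    (hb : ∀ n, v n 0 = b)
    (heq : ∀ n, ∀ s t : ℝ, 0 ≤ s → s ≤ T n → 0 ≤ t → t ≤ T n →
      dist (v n s) (v n t) = |s - t|)
    (hT : Tendsto T atTop atTop) :
    ∃ φ : ℕ → ℕ, StrictMono φ ∧ ∃ σ : ℝ → X, IsGeodesicRay σ ∧ σ 0 = b ∧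
      ∀ t : ℝ, Tendsto (fun k => v (φ k) t) atTop (𝓝 (σ t)) := by
  have hball : ∀ n (t : ℝ), v n t ∈ closedBall b |t| := by
    intro n t
    have h := hv n t 0
    rw [hb] at h
    simpa [mem_closedBall] using h
  set K : Set (ℚ → X) := Set.pi Set.univ (fun q : ℚ => closedBall b |(q : ℝ)|) with hK
  have hKc : IsCompact K := isCompact_univ_pi fun q => isCompact_closedBall b _
  have hmem : ∀ n, (fun q : ℚ => v n (q : ℝ)) ∈ K := by
    intro n q _
    exact hball n q
  obtain ⟨F, _, φ, hφ, hconv⟩ := hKc.tendsto_subseq hmem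
  have hq : ∀ q : ℚ, Tendsto (fun k => v (φ k) (q : ℝ)) atTop (𝓝 (F q)) := by
    intro q
    exact (tendsto_pi_nhds.1 hconv q)
  have hC : ∀ t : ℝ, ∃ x : X, Tendsto (fun k => v (φ k) t) atTop (𝓝 x) := by
    intro t
    apply cauchySeq_tendsto_of_complete
    rw [Metric.cauchySeq_iff]
    intro ε hε
    obtain ⟨q, hq1, hq2⟩ := exists_rat_btwn (show t - ε / 4 < t by linarith)
    have hqt : |t - (q : ℝ)| ≤ ε / 4 := by
      rw [abs_le]; constructor <;> linarith
    have hcq : CauchySeq (fun k => v (φ k) (q : ℝ)) := (hq q).cauchySeq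
    obtain ⟨N, hN⟩ := Metric.cauchySeq_iff.1 hcq (ε / 4) (by linarith)
    refine ⟨N, fun m hm n hn => ?_⟩
    have h1 := hv (φ m) t (q : ℝ)
    have h2 := hN m hm n hn
    have h3 := hv (φ n) (q : ℝ) t
    calc dist (v (φ m) t) (v (φ n) t)
        ≤ dist (v (φ m) t) (v (φ m) (q : ℝ)) + dist (v (φ m) (q : ℝ)) (v (φ n) (q : ℝ))
          + dist (v (φ n) (q : ℝ)) (v (φ n) t) := dist_triangle4 _ _ _ _
      _ < ε := by
          have h4 : |(q : ℝ) - t| = |t - (q : ℝ)| := abs_sub_comm _ _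
          rw [h4] at h3
          linarith
  choose σ hσ using hC
  have hTφ : Tendsto (fun k => T (φ k)) atTop atTop := hT.comp hφ.tendsto_atTop
  refine ⟨φ, hφ, σ, ?_, ?_, hσ⟩
  · intro s t hs ht
    have hd : Tendsto (fun k => dist (v (φ k) s) (v (φ k) t)) atTop (𝓝 (dist (σ s) (σ t))) :=
      (hσ s).dist (hσ t)
    have hev : ∀ᶠ k in atTop, dist (v (φ k) s) (v (φ k) t) = |s - t| := by
      filter_upwards [hTφ.eventually_ge_atTop (max s t)] with k hk
      exact heq (φ k) s t hs (le_trans (le_max_left _ _) hk) ht (le_trans (le_max_right _ _) hk)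
    have : Tendsto (fun k => dist (v (φ k) s) (v (φ k) t)) atTop (𝓝 |s - t|) :=
      Tendsto.congr' (Eventually.mono hev fun k hk => hk.symm) tendsto_const_nhds
    exact tendsto_nhds_unique hd this
  · have : Tendsto (fun k => v (φ k) (0 : ℝ)) atTop (𝓝 b) := by
      simpa [hb] using (tendsto_const_nhds : Tendsto (fun _ : ℕ => b) atTop (𝓝 b))
    exact tendsto_nhds_unique (hσ 0) this

/-- Extraction of a limit geodesic ray from geodesic segments `[b, w' n]`, asymptotic
to `γ`, together with the convergence data of points on the segments. -/
lemma extract {X : Type*} [MetricSpace X] [ProperSpace X]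
    (hX : IsGeodesicSpace X) {δ : ℝ} (hδ : 0 ≤ δ) (hhyp : IsDeltaHyperbolic X δ)
    {γ : ℝ → X} (hγ : IsGeodesicRay γ) (b : X) (w' : ℕ → X)
    (hw' : ∀ C > (0:ℝ), ∃ N : ℕ, ∀ n ≥ N, ∀ m : ℝ, (N:ℝ) ≤ m →
      C ≤ gromovProduct b (w' n) (γ m)) :
    ∃ ms : ℕ → ℕ, StrictMono ms ∧ ∃ σ : ℝ → X, IsGeodesicRay σ ∧ σ 0 = b ∧
      AsymptoticRays σ γ ∧ ∃ v : ℕ → ℝ → X, ∀ t : ℝ, 0 ≤ t →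
        Tendsto (fun k => v k t) atTop (𝓝 (σ t)) ∧
        ∀ᶠ k in atTop, dist (v k t) b = t ∧
          dist (v k t) (w' (ms k)) = dist b (w' (ms k)) - t := by
  classical
  set D : ℕ → ℝ := fun n => dist b (w' n) with hDdef
  have hD : ∀ n, (0:ℝ) ≤ D n := fun n => dist_nonneg
  choose g hg0 hgD hgiso using fun n => hX b (w' n)
  set v0 : ℕ → ℝ → X := fun n t => g n ((Set.projIcc (0:ℝ) (D n) (hD n) t : Set.Icc (0:ℝ) (D n)) : ℝ)
    with hv0def
  have hv : ∀ n s t, dist (v0 n s) (v0 n t) ≤ |s - t| := by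
    intro n s t
    have h := hgiso n _ (Set.projIcc (0:ℝ) (D n) (hD n) s).2 _ (Set.projIcc (0:ℝ) (D n) (hD n) t).2
    rw [hv0def]
    simp only
    rw [h]
    exact Set.abs_projIcc_sub_projIcc (hD n)
  have hb0 : ∀ n, v0 n 0 = b := by
    intro n
    rw [hv0def]
    simp only [Set.projIcc_left]
    exact hg0 n
  have hvmem : ∀ n, ∀ t : ℝ, 0 ≤ t → t ≤ D n → v0 n t = g n t := by
    intro n t ht htD
    rw [hv0def]
    simp only [Set.projIcc_of_mem (hD n) ⟨ht, htD⟩]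
  have heq : ∀ n, ∀ s t : ℝ, 0 ≤ s → s ≤ D n → 0 ≤ t → t ≤ D n →
      dist (v0 n s) (v0 n t) = |s - t| := by
    intro n s t hs hsD ht htD
    rw [hvmem n s hs hsD, hvmem n t ht htD]
    exact hgiso n s ⟨hs, hsD⟩ t ⟨ht, htD⟩
  have hDtop : Tendsto D atTop atTop := by
    rw [tendsto_atTop_atTop]
    intro C
    obtain ⟨N, hN⟩ := hw' (max C 1) (lt_of_lt_of_le one_pos (le_max_right C 1))
    refine ⟨N, fun n hn => ?_⟩
    have h1 := hN n hn (N : ℝ) le_rfl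
    have h2 := gp_le_dist b (w' n) (γ (N : ℝ))
    have h3 := dist_comm (w' n) b
    have h4 := le_max_left C 1
    simp only [hDdef]
    linarith
  obtain ⟨φ, hφ, σ, hray, hσ0, hconv⟩ := exists_limit_ray b v0 D hv hb0 heq hDtop
  have hDφ : Tendsto (fun k => D (φ k)) atTop atTop := hDtop.comp hφ.tendsto_atTop
  have hprops : ∀ t : ℝ, 0 ≤ t → ∀ n : ℕ, t ≤ D n →
      dist (v0 n t) b = t ∧ dist (v0 n t) (w' n) = D n - t := by
    intro t ht n htD
    rw [hvmem n t ht htD]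
    constructor
    · have h := hgiso n t ⟨ht, htD⟩ 0 ⟨le_rfl, hD n⟩
      rw [hg0 n] at h
      rw [h, sub_zero, abs_of_nonneg ht]
    · have h := hgiso n t ⟨ht, htD⟩ (D n) ⟨hD n, le_rfl⟩
      rw [hgD n] at h
      rw [h, abs_of_nonpos (by linarith), neg_sub]
  set k0 : ℝ := dist b (γ 0) with hk0def
  have hk0 : 0 ≤ k0 := dist_nonneg
  have hasym_pt : ∀ t : ℝ, 0 ≤ t → dist (σ t) (γ t) ≤ 3 * k0 + 4 * δ := by
    intro t ht
    obtain ⟨N, hN⟩ := hw' (max t 1) (lt_of_lt_of_le one_pos (le_max_right t 1))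
    have hev : ∀ᶠ k in atTop, dist (v0 (φ k) t) (γ t) ≤ 3 * k0 + 4 * δ := by
      filter_upwards [eventually_ge_atTop N] with k hk
      have hφk : N ≤ φ k := le_trans hk hφ.le_apply
      set n := φ k with hndef
      set m₀ : ℝ := max t (N : ℝ) with hm₀def
      have hm₀N : (N:ℝ) ≤ m₀ := le_max_right _ _
      have h1 : max t 1 ≤ gromovProduct b (w' n) (γ m₀) := hN n hφk m₀ hm₀N
      have htD : t ≤ D n := by
        have h2 := gp_le_dist b (w' n) (γ m₀)
        have h3 := dist_comm (w' n) b
        have h4 := le_max_left t 1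
        simp only [hDdef]
        linarith
      obtain ⟨ha1, ha2⟩ := hprops t ht n htD
      set a := v0 n t with hadef
      have hm₀t : t ≤ m₀ := le_max_left _ _
      have hm₀0 : 0 ≤ m₀ := le_trans ht hm₀t
      have hd1 : dist (γ m₀) (γ t) = m₀ - t := by
        rw [hγ m₀ t hm₀0 ht, abs_of_nonneg (by linarith)]
      have hd2 : dist (γ m₀) (γ 0) = m₀ := by
        rw [hγ m₀ 0 hm₀0 le_rfl, sub_zero, abs_of_nonneg hm₀0]
      have hd3 : dist (γ t) (γ 0) = t := by
        rw [hγ t 0 ht le_rfl, sub_zero, abs_of_nonneg ht]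
      have ht1 := dist_triangle (γ m₀) b (γ 0)
      have ht2 := dist_triangle (γ t) b (γ 0)
      have ht3 := dist_triangle (γ t) (γ 0) b
      have hcomm := dist_comm b (γ 0)
      have hcomm2 := dist_comm (γ 0) b
      have h2 : t - k0 ≤ gromovProduct b (γ m₀) (γ t) := by
        unfold gromovProduct
        rw [hk0def] at *
        linarith
      have h3 : t - k0 - δ ≤ gromovProduct b (w' n) (γ t) := by
        have hh := hhyp b (w' n) (γ t) (γ m₀)
        have hmin : t - k0 ≤ min (gromovProduct b (w' n) (γ m₀)) (gromovProduct b (γ m₀) (γ t)) := by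
          refine le_min ?_ h2
          have h4 := le_max_left t 1
          linarith
        linarith [hh, hmin]
      have h4 : gromovProduct b a (w' n) = t := by
        unfold gromovProduct
        rw [ha1, ha2]
        simp only [hDdef]
        rw [dist_comm (w' n) b]
        ring
      have h5 : t - k0 - 2*δ ≤ gromovProduct b a (γ t) := by
        have hh := hhyp b a (γ t) (w' n)
        have hmin : t - k0 - δ ≤ min (gromovProduct b a (w' n)) (gromovProduct b (w' n) (γ t)) := by
          refine le_min ?_ h3
          rw [h4]; linarith
        linarith [hh, hmin]
      have h6 : dist a (γ t) = dist a b + dist (γ t) b - 2 * gromovProduct b a (γ t) := by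
        unfold gromovProduct; ring
      rw [h6, ha1]
      linarith
    exact le_of_tendsto ((hconv t).dist tendsto_const_nhds) hev
  refine ⟨φ, hφ, σ, hray, hσ0, ⟨3 * k0 + 4 * δ, hasym_pt⟩, fun k t => v0 (φ k) t, ?_⟩
  intro t ht
  refine ⟨hconv t, ?_⟩
  filter_upwards [hDφ.eventually_ge_atTop t] with k hk
  exact hprops t ht (φ k) hk

/-- In a proper geodesic δ-hyperbolic space, if any two geodesic rays
asymptotic to γ are strongly asymptotic to each other, and (w_n) converges to the
boundary point of γ, then d(z, w_n) - d(w_n, p) → B_γ(z, p). -/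
theorem tendsto_busemann_of_convergence_to_boundary {X : Type*} [MetricSpace X]
    [ProperSpace X] (hX : IsGeodesicSpace X)
    (δ : ℝ) (hδ : 0 ≤ δ) (hhyp : IsDeltaHyperbolic X δ)
    (γ : ℝ → X) (hγ : IsGeodesicRay γ)
    (happ : ∀ σ₁ σ₂ : ℝ → X, IsGeodesicRay σ₁ → IsGeodesicRay σ₂ →
      AsymptoticRays σ₁ γ → AsymptoticRays σ₂ γ → StronglyAsymptotic σ₁ σ₂)
    (p z : X) (w : ℕ → X)
    (hw : ∀ C > (0 : ℝ), ∃ N : ℕ, ∀ n ≥ N, ∀ m : ℝ, (N : ℝ) ≤ m →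
      C ≤ gromovProduct p (w n) (γ m))
    (B : ℝ)
    (hB : Tendsto (fun t => dist z (γ t) - dist (γ t) p) atTop (nhds B)) :
    Tendsto (fun n => dist z (w n) - dist (w n) p) atTop (nhds B) := by
  have hfb : ∀ n : X, |dist z n - dist n p| ≤ dist z p := by
    intro x
    rw [abs_le]
    have h1 := dist_triangle z p x
    have h2 := dist_triangle x z p
    have h3 := dist_comm p x
    have h4 := dist_comm x z
    constructor <;> linarith
  have hwcomp : ∀ (b : X),
      (∀ C > (0:ℝ), ∃ N : ℕ, ∀ n ≥ N, ∀ m : ℝ, (N:ℝ) ≤ m → C ≤ gromovProduct b (w n) (γ m)) →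
      ∀ (e : ℕ → ℕ), Tendsto e atTop atTop →
      (∀ C > (0:ℝ), ∃ N : ℕ, ∀ n ≥ N, ∀ m : ℝ, (N:ℝ) ≤ m →
        C ≤ gromovProduct b (w (e n)) (γ m)) := by
    intro b hwb e he C hC
    obtain ⟨N, hN⟩ := hwb C hC
    obtain ⟨N', hN'⟩ := (tendsto_atTop_atTop.1 he) N
    refine ⟨max N N', fun n hn m hm => ?_⟩
    refine hN (e n) (hN' n (le_trans (le_max_right _ _) hn)) m ?_
    calc (N : ℝ) ≤ ((max N N' : ℕ) : ℝ) := by exact_mod_cast le_max_left N N'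
      _ ≤ m := hm
  have hwz : ∀ C > (0:ℝ), ∃ N : ℕ, ∀ n ≥ N, ∀ m : ℝ, (N:ℝ) ≤ m →
      C ≤ gromovProduct z (w n) (γ m) := by
    intro C hC
    obtain ⟨N, hN⟩ := hw (C + dist p z) (by linarith [dist_nonneg (x := p) (y := z)])
    refine ⟨N, fun n hn m hm => ?_⟩
    have h := gp_base p z (w n) (γ m)
    linarith [hN n hn m hm]
  refine tendsto_of_subseq_tendsto fun ns hns => ?_
  obtain ⟨ms₁, hms₁, σ, hσray, hσ0, hσasym, v, hv⟩ :=
    extract hX hδ hhyp hγ p (w ∘ ns) (hwcomp p hw ns hns)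
  obtain ⟨ms₂, hms₂, τ, hτray, hτ0, hτasym, u, hu⟩ :=
    extract hX hδ hhyp hγ z (w ∘ ns ∘ ms₁)
      (hwcomp z hwz (fun n => ns (ms₁ n)) (hns.comp hms₁.tendsto_atTop))
  refine ⟨ms₁ ∘ ms₂, ?_⟩
  set F : ℕ → ℝ := fun k => dist z (w (ns (ms₁ (ms₂ k)))) - dist (w (ns (ms₁ (ms₂ k)))) p
    with hFdef
  show Tendsto F atTop (𝓝 B)
  have hγγ : AsymptoticRays γ γ := ⟨0, fun t _ => by simp⟩
  have hσB : Tendsto (fun t => dist z (σ t) - dist (σ t) p) atTop (𝓝 B) :=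
    busemann_transfer hB (happ σ γ hσray hγ hσasym hγγ)
  have hτB : Tendsto (fun t => dist z (τ t) - dist (τ t) p) atTop (𝓝 B) :=
    busemann_transfer hB (happ τ γ hτray hγ hτasym hγγ)
  have hFbddA : IsBoundedUnder (· ≤ ·) atTop F :=
    isBoundedUnder_of ⟨dist z p, fun k => (abs_le.1 (hfb _)).2⟩
  have hFbddB : IsBoundedUnder (· ≥ ·) atTop F :=
    isBoundedUnder_of ⟨-(dist z p), fun k => (abs_le.1 (hfb _)).1⟩
  have hup : ∀ t : ℝ, 0 ≤ t → limsup F atTop ≤ dist z (σ t) - dist (σ t) p := by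
    intro t ht
    obtain ⟨hvc, hve⟩ := hv t ht
    set G : ℕ → ℝ := fun k => dist z (v (ms₂ k) t) - t with hGdef
    have hGlim : Tendsto G atTop (𝓝 (dist z (σ t) - t)) :=
      (((tendsto_const_nhds (x := z)).dist (hvc.comp hms₂.tendsto_atTop)).sub tendsto_const_nhds)
    have hdistσ : dist (σ t) p = t := by
      have h := hσray t 0 ht le_rfl
      rw [hσ0] at h
      rw [h, sub_zero, abs_of_nonneg ht]
    have hle : ∀ᶠ k in atTop, F k ≤ G k := by
      filter_upwards [hms₂.tendsto_atTop.eventually hve] with k hk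
      obtain ⟨he1, he2⟩ := hk
      simp only [Function.comp] at he1 he2
      have htr := dist_triangle z (v (ms₂ k) t) (w (ns (ms₁ (ms₂ k))))
      have hcomm := dist_comm (w (ns (ms₁ (ms₂ k)))) p
      simp only [hFdef, hGdef]
      have hcomm2 := dist_comm p (w (ns (ms₁ (ms₂ k))))
      linarith
    calc limsup F atTop ≤ limsup G atTop :=
          limsup_le_limsup hle hFbddB.isCoboundedUnder_le hGlim.isBoundedUnder_le
      _ = dist z (σ t) - t := hGlim.limsup_eq
      _ = dist z (σ t) - dist (σ t) p := by rw [hdistσ]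
  have hlow : ∀ t : ℝ, 0 ≤ t → dist z (τ t) - dist (τ t) p ≤ liminf F atTop := by
    intro t ht
    obtain ⟨huc, hue⟩ := hu t ht
    set G : ℕ → ℝ := fun k => t - dist (u k t) p with hGdef
    have hGlim : Tendsto G atTop (𝓝 (t - dist (τ t) p)) :=
      (tendsto_const_nhds.sub (huc.dist tendsto_const_nhds))
    have hdistτ : dist z (τ t) = t := by
      have h := hτray t 0 ht le_rfl
      rw [hτ0] at h
      rw [dist_comm, h, sub_zero, abs_of_nonneg ht]
    have hle : ∀ᶠ k in atTop, G k ≤ F k := by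
      filter_upwards [hue] with k hk
      obtain ⟨he1, he2⟩ := hk
      simp only [Function.comp] at he1 he2
      have htr := dist_triangle (w (ns (ms₁ (ms₂ k)))) (u k t) p
      have hcomm := dist_comm (u k t) (w (ns (ms₁ (ms₂ k))))
      simp only [hFdef, hGdef]
      linarith
    calc dist z (τ t) - dist (τ t) p = t - dist (τ t) p := by rw [hdistτ]
      _ = liminf G atTop := hGlim.liminf_eq.symm
      _ ≤ liminf F atTop :=
          liminf_le_liminf hle hGlim.isBoundedUnder_ge hFbddA.isCoboundedUnder_ge
  refine tendsto_of_le_liminf_of_limsup_le ?_ ?_ hFbddA hFbddB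
  · refine le_of_forall_pos_le_add fun ε hε => ?_
    have h1 : ∀ᶠ t in atTop, B - ε < dist z (τ t) - dist (τ t) p :=
      hτB.eventually (eventually_gt_nhds (by linarith))
    obtain ⟨t, ht0, ht1⟩ := ((eventually_ge_atTop (0:ℝ)).and h1).exists
    have := hlow t ht0
    linarith
  · refine le_of_forall_pos_le_add fun ε hε => ?_
    have h1 : ∀ᶠ t in atTop, dist z (σ t) - dist (σ t) p < B + ε :=
      hσB.eventually (eventually_lt_nhds (by linarith))
    obtain ⟨t, ht0, ht1⟩ := ((eventually_ge_atTop (0:ℝ)).and h1).exists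
    have := hup t ht0
    linarith
end

section
/- Let (X,d) be a proper geodesic metric space which is δ-hyperbolic for some δ ≥ 0 and has approaching geodesics, i.e. any two asymptotic geodesic rays are strongly asymptotic. Let p ∈ X and let (γ_k) be a sequence of geodesic rays with γ_k(0) = p converging uniformly on compact subsets of [0,∞) to a map γ (necessarily a geodesic ray with γ(0) = p). Then for every z ∈ X, lim_{k→∞} B_{γ_k}(z,p) = B_γ(z,p), and the convergence is uniform on compact subsets of X. -/
open Filter Metric Topology

section Helpers

variable {X : Type*} [MetricSpace X]

lemma ray_dist_zero {c : ℝ → X} {p : X} (hr : IsGeodesicRay c) (h0 : c 0 = p)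
    {t : ℝ} (ht : 0 ≤ t) : dist (c t) p = t := by
  rw [← h0, hr t 0 ht le_rfl, sub_zero, abs_of_nonneg ht]

lemma busemann_le_ray {c : ℝ → X} {p z : X} {b : ℝ} (hr : IsGeodesicRay c) (h0 : c 0 = p)
    (hb : Tendsto (fun t => dist z (c t) - dist (c t) p) atTop (nhds b))
    {t : ℝ} (ht : 0 ≤ t) : b ≤ dist z (c t) - t := by
  refine le_of_tendsto hb ?_
  filter_upwards [eventually_ge_atTop t, eventually_ge_atTop (0:ℝ)] with s hst hs0
  have h1 : dist (c s) p = s := ray_dist_zero hr h0 hs0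
  have h2 : dist z (c s) ≤ dist z (c t) + dist (c t) (c s) := dist_triangle _ _ _
  have h3 : dist (c t) (c s) = s - t := by
    rw [hr t s ht hs0, abs_of_nonpos (by linarith), neg_sub]
  rw [h1]; linarith

lemma busemann_lip {c : ℝ → X} {p : X} {bz bw : ℝ} {z w : X}
    (hbz : Tendsto (fun t => dist z (c t) - dist (c t) p) atTop (nhds bz))
    (hbw : Tendsto (fun t => dist w (c t) - dist (c t) p) atTop (nhds bw)) :
    bz - bw ≤ dist z w := by
  refine le_of_tendsto (hbz.sub hbw) ?_
  filter_upwards with t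
  have := dist_triangle z w (c t)
  linarith

lemma exists_subseq_pointwise [ProperSpace X]
    (z : X) (f : ℕ → ℝ → X)
    (hb : ∀ k u, dist (f k u) z ≤ |u|)
    (hl : ∀ k u v, dist (f k u) (f k v) ≤ |u - v|) :
    ∃ φ : ℕ → ℕ, StrictMono φ ∧ ∃ σ : ℝ → X,
      ∀ u : ℝ, Tendsto (fun j => f (φ j) u) atTop (nhds (σ u)) := by
  have hS : IsCompact (Set.univ.pi fun q : ℚ => closedBall z |(q:ℝ)|) :=
    isCompact_univ_pi fun q => isCompact_closedBall _ _
  have hmem : ∀ k, (fun q : ℚ => f k (q:ℝ)) ∈ Set.univ.pi fun q : ℚ => closedBall z |(q:ℝ)| := by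
    intro k q _
    exact mem_closedBall.2 (hb k q)
  obtain ⟨g, -, φ, hφ, hconv⟩ := hS.tendsto_subseq hmem
  rw [tendsto_pi_nhds] at hconv
  have key : ∀ u : ℝ, ∃ x : X, Tendsto (fun j => f (φ j) u) atTop (nhds x) := by
    intro u
    refine cauchySeq_tendsto_of_complete ?_
    rw [Metric.cauchySeq_iff]
    intro ε hε
    obtain ⟨q, hq⟩ := exists_rat_near u (by linarith : (0:ℝ) < ε/3)
    have hc : CauchySeq fun j => f (φ j) (q:ℝ) := (hconv q).cauchySeq
    rw [Metric.cauchySeq_iff] at hc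
    obtain ⟨N, hN⟩ := hc (ε/3) (by linarith)
    refine ⟨N, fun m hm n hn => ?_⟩
    have h1 : dist (f (φ m) u) (f (φ m) (q:ℝ)) ≤ |u - (q:ℝ)| := hl _ _ _
    have h2 : dist (f (φ n) (q:ℝ)) (f (φ n) u) ≤ |(q:ℝ) - u| := hl _ _ _
    have h3 := hN m hm n hn
    have h4 : |(q:ℝ) - u| = |u - (q:ℝ)| := abs_sub_comm _ _
    calc dist (f (φ m) u) (f (φ n) u)
        ≤ dist (f (φ m) u) (f (φ m) (q:ℝ)) + dist (f (φ m) (q:ℝ)) (f (φ n) (q:ℝ))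
          + dist (f (φ n) (q:ℝ)) (f (φ n) u) := dist_triangle4 _ _ _ _
      _ < ε := by rw [h4] at h2; linarith
  choose σ hσ using key
  exact ⟨φ, hφ, σ, hσ⟩

end Helpers

section Core

variable {X : Type*} [MetricSpace X]

lemma busemann_ge_neg {c : ℝ → X} {p z : X} {b : ℝ} (hr : IsGeodesicRay c) (h0 : c 0 = p)
    (hb : Tendsto (fun t => dist z (c t) - dist (c t) p) atTop (nhds b)) :
    -(dist z p) ≤ b := by
  refine ge_of_tendsto hb ?_
  filter_upwards [eventually_ge_atTop (0:ℝ)] with s hs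
  have h1 : dist (c s) p = s := ray_dist_zero hr h0 hs
  have h2 : dist (c s) p ≤ dist (c s) z + dist z p := dist_triangle _ _ _
  rw [h1, dist_comm (c s) z] at h2
  linarith

lemma busemann_core [ProperSpace X]
    (hX : IsGeodesicSpace X) {δ : ℝ} (hδ : 0 ≤ δ) (hhyp : IsDeltaHyperbolic X δ)
    (happ : ApproachingGeodesics X)
    (p : X) (γk : ℕ → ℝ → X) (hγk : ∀ k, IsGeodesicRay (γk k)) (hγk0 : ∀ k, γk k 0 = p)
    (γ : ℝ → X) (hγ : IsGeodesicRay γ) (hγ0 : γ 0 = p)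
    (hptconv : ∀ u : ℝ, 0 ≤ u → Tendsto (fun k => γk k u) atTop (nhds (γ u)))
    (B : ℕ → X → ℝ)
    (hB : ∀ k z, Tendsto (fun t => dist z (γk k t) - dist (γk k t) p) atTop (nhds (B k z)))
    (Bγ : X → ℝ) (hBγle : ∀ (z : X) (t : ℝ), 0 ≤ t → Bγ z ≤ dist z (γ t) - t)
    (z : X) (ε : ℝ) (hε : 0 < ε)
    (ψ : ℕ → ℕ) (hψ : StrictMono ψ) (hψB : ∀ j, B (ψ j) z ≤ Bγ z - ε) : False := by
  have hD0 : (0:ℝ) ≤ dist z p := dist_nonneg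
  -- choose times t j
  have hchoose : ∀ j : ℕ, ∃ t : ℝ, ((j:ℝ) + dist z p + 2*δ ≤ t ∧ 0 ≤ t) ∧
      dist z (γk (ψ j) t) - t ≤ B (ψ j) z + 1/((j:ℝ)+1) := by
    intro j
    have h1 : ∀ᶠ t : ℝ in atTop,
        dist z (γk (ψ j) t) - dist (γk (ψ j) t) p < B (ψ j) z + 1/((j:ℝ)+1) :=
      (hB (ψ j) z).eventually (Iio_mem_nhds (by
        have : (0:ℝ) < 1/((j:ℝ)+1) := by positivity
        linarith))
    have h2 : ∀ᶠ t : ℝ in atTop, ((j:ℝ) + dist z p + 2*δ ≤ t ∧ 0 ≤ t) :=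
      (eventually_ge_atTop _).and (eventually_ge_atTop _)
    obtain ⟨t, ht1, ht2⟩ := (h1.and h2).exists
    refine ⟨t, ht2, ?_⟩
    rw [ray_dist_zero (hγk (ψ j)) (hγk0 (ψ j)) ht2.2] at ht1
    exact ht1.le
  choose t h12 ht2 using hchoose
  have ht1 := fun j => (h12 j).1
  have ht0 := fun j => (h12 j).2
  -- the endpoints and lengths
  have hBlow : ∀ j, -(dist z p) ≤ B (ψ j) z :=
    fun j => busemann_ge_neg (hγk (ψ j)) (hγk0 (ψ j)) (hB (ψ j) z)
  have hpx : ∀ j, dist p (γk (ψ j) (t j)) = t j := by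
    intro j
    rw [dist_comm]
    exact ray_dist_zero (hγk (ψ j)) (hγk0 (ψ j)) (ht0 j)
  have hLt : ∀ j, t j - dist z p ≤ dist z (γk (ψ j) (t j)) := by
    intro j
    have h1 := dist_triangle p z (γk (ψ j) (t j))
    rw [hpx j, dist_comm p z] at h1
    linarith
  have hL1 : ∀ j, B (ψ j) z + t j ≤ dist z (γk (ψ j) (t j)) := by
    intro j
    have := busemann_le_ray (hγk (ψ j)) (hγk0 (ψ j)) (hB (ψ j) z) (ht0 j)
    linarith
  have hL2 : ∀ j, dist z (γk (ψ j) (t j)) ≤ t j + B (ψ j) z + 1/((j:ℝ)+1) := by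
    intro j
    have := ht2 j
    linarith
  have hL0 : ∀ j, (0:ℝ) ≤ dist z (γk (ψ j) (t j)) := fun j => dist_nonneg
  -- geodesics from z to the endpoints
  choose c hc0 hcL hciso using fun j => hX z (γk (ψ j) (t j))
  set L := fun j => dist z (γk (ψ j) (t j)) with hLdef
  set σ' := fun j (u:ℝ) => c j (max (min u (L j)) 0) with hσ'def
  have hclamp_mem : ∀ j (u:ℝ), max (min u (L j)) 0 ∈ Set.Icc (0:ℝ) (L j) :=
    fun j u => ⟨le_max_right _ _, max_le (min_le_right _ _) (hL0 j)⟩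
  have hσeq : ∀ j (u:ℝ), 0 ≤ u → u ≤ L j → σ' j u = c j u := by
    intro j u h1 h2
    simp only [hσ'def, min_eq_left h2, max_eq_left h1]
  have hσb : ∀ j (u:ℝ), dist (σ' j u) z ≤ |u| := by
    intro j u
    have h := hciso j _ (hclamp_mem j u) 0 ⟨le_rfl, hL0 j⟩
    rw [hc0 j] at h
    simp only [hσ'def]
    rw [h, sub_zero, abs_of_nonneg (le_max_right _ _)]
    exact max_le (le_trans (min_le_left _ _) (le_abs_self u)) (abs_nonneg u)
  have hσl : ∀ j (u v:ℝ), dist (σ' j u) (σ' j v) ≤ |u - v| := by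
    intro j u v
    have h := hciso j _ (hclamp_mem j u) _ (hclamp_mem j v)
    simp only [hσ'def]
    rw [h]
    refine le_trans (abs_max_sub_max_le_abs _ _ _) ?_
    have h2 := abs_min_sub_min_le_max u (L j) v (L j)
    simpa using h2
  obtain ⟨φ, hφ, σ, hσ⟩ := exists_subseq_pointwise z σ' hσb hσl
  -- index bounds
  have hcast : ∀ j : ℕ, (j:ℝ) ≤ ((φ j : ℕ):ℝ) := fun j => Nat.cast_le.2 hφ.le_apply
  have htφ : ∀ j : ℕ, (j:ℝ) + dist z p + 2*δ ≤ t (φ j) :=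
    fun j => le_trans (by linarith [hcast j]) (ht1 (φ j))
  have hLφ : ∀ j : ℕ, (j:ℝ) + 2*δ ≤ L (φ j) := fun j => by
    have h1 := hLt (φ j)
    have h2 := htφ j
    simp only [hLdef]
    linarith
  -- σ 0 = z
  have hσ0 : σ 0 = z := by
    have h1 : Tendsto (fun j => σ' (φ j) 0) atTop (nhds (σ 0)) := hσ 0
    have h2 : (fun j => σ' (φ j) 0) = fun _ => z := by
      funext j
      rw [hσeq (φ j) 0 le_rfl (hL0 (φ j)), hc0]
    rw [h2] at h1
    exact tendsto_nhds_unique h1 tendsto_const_nhds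
  -- σ is a geodesic ray
  have hσray : IsGeodesicRay σ := by
    intro u v hu hv
    have h1 : Tendsto (fun j => dist (σ' (φ j) u) (σ' (φ j) v)) atTop (nhds (dist (σ u) (σ v))) :=
      (hσ u).dist (hσ v)
    have h2 : ∀ᶠ j in atTop, dist (σ' (φ j) u) (σ' (φ j) v) = |u - v| := by
      filter_upwards [tendsto_natCast_atTop_atTop.eventually_ge_atTop (max u v)] with j hj
      have huL : u ≤ L (φ j) := le_trans (le_trans (le_max_left u v) hj) (by linarith [hLφ j])
      have hvL : v ≤ L (φ j) := le_trans (le_trans (le_max_right u v) hj) (by linarith [hLφ j])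
      rw [hσeq _ u hu huL, hσeq _ v hv hvL]
      exact hciso _ u ⟨hu, huL⟩ v ⟨hv, hvL⟩
    have h3 : Tendsto (fun j => dist (σ' (φ j) u) (σ' (φ j) v)) atTop (nhds (|u - v|)) :=
      tendsto_const_nhds.congr' (by filter_upwards [h2] with j hj; rw [hj])
    exact tendsto_nhds_unique h1 h3
  -- lower bound on dist (σ u) p
  have hlow : ∀ u : ℝ, 0 ≤ u → u - Bγ z + ε ≤ dist (σ u) p := by
    intro u hu
    have key : ∀ η : ℝ, 0 < η → u - Bγ z + ε - η ≤ dist (σ u) p := by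
      intro η hη
      have h1 : Tendsto (fun j => dist (σ' (φ j) u) p) atTop (nhds (dist (σ u) p)) :=
        (hσ u).dist tendsto_const_nhds
      refine ge_of_tendsto h1 ?_
      have hη' : ∀ᶠ j : ℕ in atTop, 1/((j:ℝ)+1) < η :=
        tendsto_one_div_add_atTop_nhds_zero_nat.eventually (Iio_mem_nhds hη)
      filter_upwards [tendsto_natCast_atTop_atTop.eventually_ge_atTop u, hη'] with j hj hjη
      have huL : u ≤ L (φ j) := le_trans hj (by linarith [hLφ j])
      have hd1 : dist (σ' (φ j) u) (γk (ψ (φ j)) (t (φ j))) = L (φ j) - u := by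
        rw [hσeq _ u hu huL, ← hcL (φ j), hciso _ u ⟨hu, huL⟩ _ ⟨hL0 _, le_rfl⟩,
          abs_of_nonpos (by linarith), neg_sub]
      have htri := dist_triangle p (σ' (φ j) u) (γk (ψ (φ j)) (t (φ j)))
      rw [hpx (φ j), hd1, dist_comm p (σ' (φ j) u)] at htri
      have hφη : 1/(((φ j : ℕ):ℝ)+1) ≤ 1/((j:ℝ)+1) := by
        apply one_div_le_one_div_of_le (by positivity)
        linarith [hcast j]
      have h5 := hL2 (φ j)
      have h6 := hψB (ψ (φ j))
      have h6' := hψB (φ j)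
      simp only [hLdef] at huL hd1 htri ⊢
      linarith
    by_contra hcon
    push_neg at hcon
    have := key ((u - Bγ z + ε - dist (σ u) p)/2) (by linarith)
    linarith
  -- asymptotic bound
  have hasym : ∀ u : ℝ, 0 ≤ u → dist (γ u) (σ u) ≤ 3*(dist z p) + 4*δ := by
    intro u hu
    rcases le_or_gt u (dist z p + 2*δ) with hcase | hcase
    · refine le_of_tendsto (tendsto_const_nhds.dist (hσ u)) ?_
      filter_upwards with j
      have h1 : dist (γ u) p = u := ray_dist_zero hγ hγ0 hu
      have h2 : dist (σ' (φ j) u) z ≤ |u| := hσb (φ j) u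
      rw [abs_of_nonneg hu] at h2
      calc dist (γ u) (σ' (φ j) u)
          ≤ dist (γ u) p + dist p z + dist z (σ' (φ j) u) := dist_triangle4 _ _ _ _
        _ ≤ u + dist z p + u := by
            rw [h1, dist_comm p z, dist_comm z (σ' (φ j) u)]; linarith
        _ ≤ 3*(dist z p) + 4*δ := by linarith
    · -- hard case : u > dist z p + 2δ
      have hγku : Tendsto (fun j => γk (ψ (φ j)) u) atTop (nhds (γ u)) :=
        (hptconv u hu).comp (hψ.comp hφ).tendsto_atTop
      have hdist0 : Tendsto (fun j => dist (γ u) (γk (ψ (φ j)) u)) atTop (nhds 0) := by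
        have h := Tendsto.dist (tendsto_const_nhds : Tendsto (fun _ : ℕ => γ u) atTop (nhds (γ u))) hγku
        simpa using h
      have h1 : Tendsto (fun j => dist (γ u) (σ' (φ j) u) - dist (γ u) (γk (ψ (φ j)) u))
          atTop (nhds (dist (γ u) (σ u) - 0)) := (tendsto_const_nhds.dist (hσ u)).sub hdist0
      have h2 : ∀ᶠ j in atTop,
          dist (γ u) (σ' (φ j) u) - dist (γ u) (γk (ψ (φ j)) u) ≤ dist z p + 4*δ := by
        filter_upwards [tendsto_natCast_atTop_atTop.eventually_ge_atTop u] with j hj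
        have huL : u ≤ L (φ j) := le_trans hj (by linarith [hLφ j])
        have htt : u + dist z p + 2*δ ≤ t (φ j) := by linarith [htφ j]
        have hyc : σ' (φ j) u = c (φ j) u := hσeq _ u hu huL
        have dyz : dist (σ' (φ j) u) z = u := by
          rw [hyc, ← hc0 (φ j), hciso _ u ⟨hu, huL⟩ 0 ⟨le_rfl, hL0 _⟩, sub_zero, abs_of_nonneg hu]
        have dyx : dist (σ' (φ j) u) (γk (ψ (φ j)) (t (φ j))) = L (φ j) - u := by
          rw [hyc, ← hcL (φ j), hciso _ u ⟨hu, huL⟩ _ ⟨hL0 _, le_rfl⟩,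
            abs_of_nonpos (by linarith), neg_sub]
        have dzx : dist z (γk (ψ (φ j)) (t (φ j))) = L (φ j) := rfl
        have dpx : dist p (γk (ψ (φ j)) (t (φ j))) = t (φ j) := hpx (φ j)
        -- Gromov product (p|x)_y is at most δ
        have h4 := hhyp (σ' (φ j) u) z (γk (ψ (φ j)) (t (φ j))) p
        have hgzx : gromovProduct (σ' (φ j) u) z (γk (ψ (φ j)) (t (φ j))) = 0 := by
          simp only [gromovProduct]
          rw [dist_comm z (σ' (φ j) u), dist_comm (γk (ψ (φ j)) (t (φ j))) (σ' (φ j) u),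
            dyz, dyx, dzx]
          ring
        have hpy1 : u - dist z p ≤ dist p (σ' (φ j) u) := by
          have htri := dist_triangle (σ' (φ j) u) p z
          rw [dyz] at htri
          have e1 : dist p z = dist z p := dist_comm p z
          have e2 : dist (σ' (φ j) u) p = dist p (σ' (φ j) u) := dist_comm _ _
          linarith
        have hpy2 : dist p (σ' (φ j) u) ≤ u + dist z p := by
          have htri := dist_triangle p z (σ' (φ j) u)
          rw [dist_comm p z, dist_comm z (σ' (φ j) u), dyz] at htri
          linarith
        have hgzp : u - dist z p ≤ gromovProduct (σ' (φ j) u) z p := by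
          simp only [gromovProduct]
          rw [dist_comm z (σ' (φ j) u), dyz]
          linarith
        have hgpx : gromovProduct (σ' (φ j) u) p (γk (ψ (φ j)) (t (φ j))) ≤ δ := by
          by_contra hc'
          push_neg at hc'
          have hA : δ < gromovProduct (σ' (φ j) u) z p := by linarith
          have hmin := lt_min hA hc'
          rw [hgzx] at h4
          linarith
        -- the point γk s with s = dist (σ' j u) p
        have hs0 : (0:ℝ) ≤ dist (σ' (φ j) u) p := dist_nonneg
        have hsL : dist (σ' (φ j) u) p + (L (φ j) - u) - t (φ j) ≤ 2*δ := by
          have hg : gromovProduct (σ' (φ j) u) p (γk (ψ (φ j)) (t (φ j))) =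
              (dist p (σ' (φ j) u) + dist (γk (ψ (φ j)) (t (φ j))) (σ' (φ j) u)
               - dist p (γk (ψ (φ j)) (t (φ j))))/2 := rfl
          rw [hg, dist_comm p (σ' (φ j) u),
            dist_comm (γk (ψ (φ j)) (t (φ j))) (σ' (φ j) u), dyx, dpx] at hgpx
          linarith
        have hst : dist (σ' (φ j) u) p ≤ t (φ j) := by
          have h5 := hL1 (φ j)
          have h6 := hBlow (φ j)
          have h7 : dist (σ' (φ j) u) p ≤ u + dist z p := by
            rw [dist_comm]; exact hpy2
          have h8 : L (φ j) ≥ t (φ j) - dist z p := by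
            simp only [hLdef]; exact hLt (φ j)
          linarith
        have dpw : dist (γk (ψ (φ j)) (dist (σ' (φ j) u) p)) p = dist (σ' (φ j) u) p :=
          ray_dist_zero (hγk (ψ (φ j))) (hγk0 (ψ (φ j))) hs0
        have dwx : dist (γk (ψ (φ j)) (dist (σ' (φ j) u) p)) (γk (ψ (φ j)) (t (φ j)))
            = t (φ j) - dist (σ' (φ j) u) p := by
          rw [hγk (ψ (φ j)) _ _ hs0 (ht0 (φ j)), abs_of_nonpos (by linarith), neg_sub]
        have h5 := hhyp p (σ' (φ j) u) (γk (ψ (φ j)) (dist (σ' (φ j) u) p))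
          (γk (ψ (φ j)) (t (φ j)))
        have hg1 : dist (σ' (φ j) u) p - δ ≤
            gromovProduct p (σ' (φ j) u) (γk (ψ (φ j)) (t (φ j))) := by
          simp only [gromovProduct]
          have e3 : dist (γk (ψ (φ j)) (t (φ j))) p = t (φ j) := by
            rw [dist_comm]; exact dpx
          rw [e3, dyx]
          linarith
        have hg2 : gromovProduct p (γk (ψ (φ j)) (t (φ j)))
            (γk (ψ (φ j)) (dist (σ' (φ j) u) p)) = dist (σ' (φ j) u) p := by
          simp only [gromovProduct]
          rw [dist_comm (γk (ψ (φ j)) (t (φ j))) p, dpx, dpw,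
            dist_comm (γk (ψ (φ j)) (t (φ j))) (γk (ψ (φ j)) (dist (σ' (φ j) u) p)), dwx]
          ring
        have hg3 : dist (σ' (φ j) u) p - 2*δ ≤
            gromovProduct p (σ' (φ j) u) (γk (ψ (φ j)) (dist (σ' (φ j) u) p)) := by
          have hmin : dist (σ' (φ j) u) p - δ ≤
              min (gromovProduct p (σ' (φ j) u) (γk (ψ (φ j)) (t (φ j))))
                (gromovProduct p (γk (ψ (φ j)) (t (φ j)))
                  (γk (ψ (φ j)) (dist (σ' (φ j) u) p))) :=
            le_min hg1 (by rw [hg2]; linarith)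
          linarith
        have hyw : dist (σ' (φ j) u) (γk (ψ (φ j)) (dist (σ' (φ j) u) p)) ≤ 4*δ := by
          have hg : gromovProduct p (σ' (φ j) u) (γk (ψ (φ j)) (dist (σ' (φ j) u) p)) =
              (dist (σ' (φ j) u) p + dist (γk (ψ (φ j)) (dist (σ' (φ j) u) p)) p
               - dist (σ' (φ j) u) (γk (ψ (φ j)) (dist (σ' (φ j) u) p)))/2 := rfl
          rw [hg, dpw] at hg3
          linarith
        have hwu : dist (γk (ψ (φ j)) u) (γk (ψ (φ j)) (dist (σ' (φ j) u) p)) ≤ dist z p := by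
          rw [hγk (ψ (φ j)) _ _ hu hs0]
          rw [abs_le]
          constructor
          · rw [dist_comm] at hpy2; linarith [(dist_comm (σ' (φ j) u) p) ▸ hpy2]
          · rw [dist_comm p (σ' (φ j) u)] at hpy1; linarith
        have htri : dist (γ u) (σ' (φ j) u) ≤ dist (γ u) (γk (ψ (φ j)) u)
            + dist (γk (ψ (φ j)) u) (γk (ψ (φ j)) (dist (σ' (φ j) u) p))
            + dist (γk (ψ (φ j)) (dist (σ' (φ j) u) p)) (σ' (φ j) u) := dist_triangle4 _ _ _ _
        rw [dist_comm (γk (ψ (φ j)) (dist (σ' (φ j) u) p)) (σ' (φ j) u)] at htri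
        linarith
      have h3 := le_of_tendsto h1 h2
      linarith
  -- apply approaching geodesics
  obtain ⟨T, S, hT, hS, hlim⟩ := happ γ σ hγ hσray ⟨3*(dist z p) + 4*δ, hasym⟩
  have hσz : ∀ u : ℝ, 0 ≤ u → dist z (σ u) = u := by
    intro u hu
    rw [dist_comm, ← hσ0, hσray u 0 hu le_rfl, sub_zero, abs_of_nonneg hu]
  have h6 : Bγ z ≤ S - T := by
    have hev : ∀ᶠ tt : ℝ in atTop, Bγ z - (S - T) ≤ dist (γ (tt + T)) (σ (tt + S)) := by
      filter_upwards [eventually_ge_atTop (0:ℝ)] with tt htt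
      have hb := hBγle z (tt + T) (by linarith)
      have htri := dist_triangle z (σ (tt + S)) (γ (tt + T))
      rw [hσz (tt + S) (by linarith)] at htri
      rw [dist_comm (σ (tt + S)) (γ (tt + T))] at htri
      linarith
    have := ge_of_tendsto hlim hev
    linarith
  have h7 : S - T + ε ≤ Bγ z := by
    have hev : ∀ᶠ tt : ℝ in atTop, (S - T) + ε - Bγ z ≤ dist (γ (tt + T)) (σ (tt + S)) := by
      filter_upwards [eventually_ge_atTop (0:ℝ)] with tt htt
      have h8 := hlow (tt + S) (by linarith)
      have htri := dist_triangle (σ (tt + S)) (γ (tt + T)) p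
      have h9 : dist (γ (tt + T)) p = tt + T := ray_dist_zero hγ hγ0 (by linarith)
      rw [h9, dist_comm (σ (tt + S)) (γ (tt + T))] at htri
      linarith
    have := ge_of_tendsto hlim hev
    linarith
  linarith

end Core

/-- In a proper geodesic δ-hyperbolic space with approaching
geodesics, if geodesic rays γ_k starting at p converge uniformly on compacts of
[0,∞) to γ, then the Busemann functions B_{γ_k}(·, p) converge to B_γ(·, p)
pointwise and uniformly on compact subsets of X. -/
theorem busemann_tendsto_of_rays_tendsto {X : Type*} [MetricSpace X] [ProperSpace X]
    (hX : IsGeodesicSpace X)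
    (δ : ℝ) (hδ : 0 ≤ δ) (hhyp : IsDeltaHyperbolic X δ)
    (happ : ApproachingGeodesics X)
    (p : X) (γk : ℕ → ℝ → X) (hγk : ∀ k, IsGeodesicRay (γk k))
    (hγk0 : ∀ k, γk k 0 = p)
    (γ : ℝ → X) (hγ : IsGeodesicRay γ) (hγ0 : γ 0 = p)
    (hconv : ∀ K : Set ℝ, IsCompact K → K ⊆ Set.Ici (0 : ℝ) →
      TendstoUniformlyOn (fun k t => γk k t) γ atTop K)
    (B : ℕ → X → ℝ)
    (hB : ∀ k z, Tendsto (fun t => dist z (γk k t) - dist (γk k t) p) atTop (nhds (B k z)))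
    (Bγ : X → ℝ)
    (hBγ : ∀ z, Tendsto (fun t => dist z (γ t) - dist (γ t) p) atTop (nhds (Bγ z))) :
    (∀ z : X, Tendsto (fun k => B k z) atTop (nhds (Bγ z))) ∧
    (∀ K : Set X, IsCompact K → TendstoUniformlyOn (fun k z => B k z) Bγ atTop K) := by
  have hptconv : ∀ u : ℝ, 0 ≤ u → Tendsto (fun k => γk k u) atTop (nhds (γ u)) := by
    intro u hu
    have h := (hconv {u} isCompact_singleton (by
      intro x hx
      rw [Set.mem_singleton_iff] at hx
      rw [hx]
      exact hu)).tendsto_at (Set.mem_singleton u)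
    simpa using h
  have hBγle : ∀ (z : X) (s : ℝ), 0 ≤ s → Bγ z ≤ dist z (γ s) - s :=
    fun z s hs => busemann_le_ray hγ hγ0 (hBγ z) hs
  have main : ∀ z : X, Tendsto (fun k => B k z) atTop (nhds (Bγ z)) := by
    intro z
    rw [Metric.tendsto_nhds]
    intro ε hε
    have hupper : ∀ᶠ k in atTop, B k z < Bγ z + ε := by
      have h1 : ∀ᶠ s : ℝ in atTop, dist z (γ s) - dist (γ s) p < Bγ z + ε/2 :=
        (hBγ z).eventually (Iio_mem_nhds (by linarith))
      obtain ⟨s, hs1, hs0⟩ := (h1.and (eventually_ge_atTop (0:ℝ))).exists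
      rw [ray_dist_zero hγ hγ0 hs0] at hs1
      have h2 : ∀ᶠ k in atTop, dist (γk k s) (γ s) < ε/2 :=
        Metric.tendsto_nhds.1 (hptconv s hs0) (ε/2) (by linarith)
      filter_upwards [h2] with k hk
      have hb := busemann_le_ray (hγk k) (hγk0 k) (hB k z) hs0
      have htri := dist_triangle z (γ s) (γk k s)
      rw [dist_comm (γ s) (γk k s)] at htri
      linarith
    have hlower : ∀ᶠ k in atTop, Bγ z - ε < B k z := by
      by_contra hcon
      rw [Filter.not_eventually] at hcon
      have hcon2 : ∃ᶠ k in atTop, B k z ≤ Bγ z - ε :=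
        hcon.mono fun k hk => by linarith [not_lt.1 hk]
      obtain ⟨ψ, hψ, hψB⟩ := Filter.extraction_of_frequently_atTop hcon2
      exact absurd (busemann_core hX hδ hhyp happ p γk hγk hγk0 γ hγ hγ0 hptconv B hB Bγ
        hBγle z ε hε ψ hψ hψB) (by simp)
    filter_upwards [hupper, hlower] with k h1 h2
    rw [Real.dist_eq, abs_sub_lt_iff]
    constructor <;> linarith
  refine ⟨main, fun K hK => ?_⟩
  have hlipB : ∀ k (a b : X), B k a - B k b ≤ dist a b :=
    fun k a b => busemann_lip (hB k a) (hB k b)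
  have hlipBγ : ∀ a b : X, Bγ a - Bγ b ≤ dist a b :=
    fun a b => busemann_lip (hBγ a) (hBγ b)
  rw [Metric.tendstoUniformlyOn_iff]
  intro ε hε
  have hcover : K ⊆ ⋃ w ∈ K, ball w (ε/3) := fun x hx =>
    Set.mem_biUnion hx (mem_ball_self (by linarith))
  obtain ⟨b', hb'K, hb'fin, hb'cover⟩ :=
    hK.elim_finite_subcover_image (fun w _ => isOpen_ball) hcover
  have hev : ∀ᶠ k in atTop, ∀ w ∈ b', dist (B k w) (Bγ w) < ε/3 := by
    rw [eventually_all_finite hb'fin]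
    intro w _
    exact Metric.tendsto_nhds.1 (main w) (ε/3) (by linarith)
  filter_upwards [hev] with k hk x hx
  obtain ⟨w, hwb', hxw⟩ := Set.mem_iUnion₂.1 (hb'cover hx)
  have h1 := hk w hwb'
  rw [Real.dist_eq, abs_sub_lt_iff] at h1
  have h2 : dist x w < ε/3 := mem_ball.1 hxw
  have h3 := hlipB k x w
  have h4 := hlipB k w x
  have h5 := hlipBγ x w
  have h6 := hlipBγ w x
  rw [dist_comm w x] at h4 h6
  rw [Real.dist_eq, abs_sub_lt_iff]
  constructor <;> linarith
end

section
/- Let (X,d) be a proper geodesic metric space which is δ-hyperbolic for some δ ≥ 0 and has approaching geodesics, i.e. any two asymptotic geodesic rays are strongly asymptotic. Let p ∈ X and let (w_n) be a sequence in X with d(w_n,p) → ∞ such that the functions x ↦ d(x,w_n) − d(w_n,p) converge pointwise on X to a function h : X → ℝ. Then there exists a geodesic ray γ with γ(0) = p such that h(x) = B_γ(x,p) for all x ∈ X (every horofunction is a Busemann function). -/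
open Filter Metric Topology

private lemma exists_limit_ray_s5 {X : Type*} [MetricSpace X] [ProperSpace X]
    (hX : IsGeodesicSpace X) (q : X) (w : ℕ → X)
    (U : Ultrafilter ℕ) (hU : (U : Filter ℕ) ≤ atTop)
    (hw : Tendsto (fun n => dist (w n) q) atTop atTop) :
    ∃ (σ : ℕ → ℝ → X) (r : ℝ → X),
      (∀ n, σ n 0 = q) ∧
      (∀ n, ∀ s t : ℝ, 0 ≤ s → s ≤ dist q (w n) → 0 ≤ t → t ≤ dist q (w n) →
          dist (σ n s) (σ n t) = |s - t|) ∧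
      (∀ n, σ n (dist q (w n)) = w n) ∧
      IsGeodesicRay r ∧ r 0 = q ∧
      (∀ t : ℝ, Tendsto (fun n => σ n t) (U : Filter ℕ) (𝓝 (r t))) := by
  choose g hg0 hgend hgiso using fun n => hX q (w n)
  set c : ℕ → ℝ → ℝ := fun n t => max 0 (min t (dist q (w n))) with hc
  have hcmem : ∀ n t, c n t ∈ Set.Icc (0:ℝ) (dist q (w n)) := fun n t =>
    ⟨le_max_left _ _, max_le dist_nonneg (min_le_right _ _)⟩
  have hceq : ∀ n, ∀ t : ℝ, 0 ≤ t → t ≤ dist q (w n) → c n t = t := by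
    intro n t h0 h1
    simp [hc, min_eq_left h1, max_eq_right h0]
  set σ : ℕ → ℝ → X := fun n t => g n (c n t) with hσdef
  have hσ0 : ∀ n, σ n 0 = q := by
    intro n
    show g n (c n 0) = q
    rw [hceq n 0 le_rfl dist_nonneg]
    exact hg0 n
  have hσiso : ∀ n, ∀ s t : ℝ, 0 ≤ s → s ≤ dist q (w n) → 0 ≤ t → t ≤ dist q (w n) →
      dist (σ n s) (σ n t) = |s - t| := by
    intro n s t hs hs' ht ht'
    show dist (g n (c n s)) (g n (c n t)) = _
    rw [hceq n s hs hs', hceq n t ht ht']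
    exact hgiso n s ⟨hs, hs'⟩ t ⟨ht, ht'⟩
  have hσend : ∀ n, σ n (dist q (w n)) = w n := by
    intro n
    show g n (c n (dist q (w n))) = w n
    rw [hceq n _ dist_nonneg le_rfl]
    exact hgend n
  have hball : ∀ n t, σ n t ∈ closedBall q |t| := by
    intro n t
    have h1 : dist (σ n t) q = c n t := by
      have h2 := hgiso n (c n t) (hcmem n t) 0 ⟨le_rfl, dist_nonneg⟩
      rw [hg0 n] at h2
      show dist (g n (c n t)) q = c n t
      rw [h2, sub_zero, abs_of_nonneg (hcmem n t).1]
    rw [mem_closedBall, h1]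
    exact max_le (abs_nonneg t) ((min_le_left _ _).trans (le_abs_self t))
  have key : ∀ t : ℝ, ∃ a, Tendsto (fun n => σ n t) (U : Filter ℕ) (𝓝 a) := by
    intro t
    obtain ⟨a, -, ha⟩ := (isCompact_closedBall q |t|).ultrafilter_le_nhds
      (U.map fun n => σ n t)
      (by rw [Ultrafilter.coe_map, le_principal_iff]
          exact mem_map.mpr (univ_mem' fun n => hball n t))
    exact ⟨a, by rwa [Ultrafilter.coe_map] at ha⟩
  choose r hr using key
  refine ⟨σ, r, hσ0, hσiso, hσend, ?_, ?_, hr⟩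
  · intro s t hs ht
    have h1 : Tendsto (fun n => dist (σ n s) (σ n t)) (U : Filter ℕ) (𝓝 (dist (r s) (r t))) :=
      (hr s).dist (hr t)
    have h2 : ∀ᶠ n in (U : Filter ℕ), dist (σ n s) (σ n t) = |s - t| := by
      filter_upwards [(hw.eventually_ge_atTop (max s t)).filter_mono hU] with n hn
      have hn' : max s t ≤ dist q (w n) := by rwa [dist_comm]
      exact hσiso n s t hs ((le_max_left s t).trans hn') ht ((le_max_right s t).trans hn')
    have h3 : Tendsto (fun n => dist (σ n s) (σ n t)) (U : Filter ℕ) (𝓝 |s - t|) :=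
      Tendsto.congr' (h2.mono fun n hn => hn.symm) tendsto_const_nhds
    exact tendsto_nhds_unique h1 h3
  · have h1 : Tendsto (fun n => σ n 0) (U : Filter ℕ) (𝓝 q) := by
      simp only [hσ0]; exact tendsto_const_nhds
    exact tendsto_nhds_unique (hr 0) h1

/-- In a proper geodesic δ-hyperbolic space with approaching
geodesics, every horofunction (vanishing at p) is a Busemann function of some
geodesic ray starting at p. -/
theorem horofunction_is_busemann {X : Type*} [MetricSpace X] [ProperSpace X]
    (hX : IsGeodesicSpace X)
    (δ : ℝ) (hδ : 0 ≤ δ) (hhyp : IsDeltaHyperbolic X δ)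
    (happ : ApproachingGeodesics X)
    (p : X) (w : ℕ → X)
    (hw : Tendsto (fun n => dist (w n) p) atTop atTop)
    (h : X → ℝ)
    (hconv : ∀ x : X, Tendsto (fun n => dist x (w n) - dist (w n) p) atTop (nhds (h x))) :
    ∃ γ : ℝ → X, IsGeodesicRay γ ∧ γ 0 = p ∧
      ∀ x : X, Tendsto (fun t => dist x (γ t) - dist (γ t) p) atTop (nhds (h x)) := by
  set U : Ultrafilter ℕ := Ultrafilter.of atTop with hUdef
  have hU : (U : Filter ℕ) ≤ atTop := Ultrafilter.of_le atTop
  obtain ⟨σ, γ, hσ0, hσiso, hσend, hγray, hγ0, hγlim⟩ := exists_limit_ray_s5 hX p w U hU hw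
  have hLip : ∀ a b : X, h a ≤ h b + dist a b := by
    intro a b
    refine le_of_tendsto_of_tendsto' (hconv a) (((hconv b).add_const (dist a b))) fun n => ?_
    have := dist_triangle a b (w n)
    linarith
  have hp0 : h p = 0 := by
    have h1 : Tendsto (fun n => dist p (w n) - dist (w n) p) atTop (𝓝 0) := by
      have : (fun n => dist p (w n) - dist (w n) p) = fun _ => (0:ℝ) := by
        funext n; rw [dist_comm]; ring
      rw [this]; exact tendsto_const_nhds
    exact tendsto_nhds_unique (hconv p) h1
  have hγp : ∀ t : ℝ, 0 ≤ t → dist (γ t) p = t := by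
    intro t ht
    have h1 := hγray t 0 ht le_rfl
    rw [hγ0] at h1
    rw [h1, sub_zero, abs_of_nonneg ht]
  have hlow : ∀ (y : X) (t : ℝ), 0 ≤ t → h y ≤ dist y (γ t) - t := by
    intro y t ht
    have hA : Tendsto (fun n => dist y (w n) - dist (w n) p) (U:Filter ℕ) (𝓝 (h y)) :=
      (hconv y).mono_left hU
    have hB : Tendsto (fun n => dist y (σ n t) - t) (U:Filter ℕ) (𝓝 (dist y (γ t) - t)) :=
      (tendsto_const_nhds.dist (hγlim t)).sub_const t
    refine le_of_tendsto_of_tendsto hA hB ?_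
    filter_upwards [(hw.eventually_ge_atTop t).filter_mono hU] with n hn
    have hn' : t ≤ dist p (w n) := by rwa [dist_comm]
    have h1 : dist (σ n t) (w n) = dist p (w n) - t := by
      have h2 := hσiso n t (dist p (w n)) ht hn' dist_nonneg le_rfl
      rw [hσend n] at h2
      rw [h2, abs_of_nonpos (by linarith)]; ring
    have h2 := dist_triangle y (σ n t) (w n)
    rw [h1] at h2
    have h3 : dist (w n) p = dist p (w n) := dist_comm _ _
    show dist y (w n) - dist (w n) p ≤ dist y (σ n t) - t
    linarith
  have hγh : ∀ t : ℝ, 0 ≤ t → h (γ t) = -t := by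
    intro t ht
    have h1 : h (γ t) ≤ -t := by
      have := hlow (γ t) t ht
      simpa using this
    have h2 : -t ≤ h (γ t) := by
      have h3 := hLip p (γ t)
      rw [hp0, dist_comm p (γ t)] at h3
      have h4 := hγp t ht
      linarith
    linarith
  refine ⟨γ, hγray, hγ0, fun x => ?_⟩
  have hwx : Tendsto (fun n => dist (w n) x) atTop atTop := by
    refine tendsto_atTop_mono (fun n => ?_) (tendsto_atTop_add_const_right atTop (-(dist p x)) hw)
    have h1 := dist_triangle (w n) x p
    have h2 := dist_triangle (w n) p x
    have h3 : dist x p = dist p x := dist_comm _ _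
    linarith
  obtain ⟨ρn, ρ, hρ0, hρiso, hρend, hρray, hρ00, hρlim⟩ := exists_limit_ray_s5 hX x w U hU hwx
  have hxρ : ∀ s : ℝ, 0 ≤ s → dist x (ρ s) = s := by
    intro s hs
    have h1 := hρray 0 s le_rfl hs
    rw [hρ00] at h1
    rw [h1, zero_sub, abs_neg, abs_of_nonneg hs]
  have hρh : ∀ s : ℝ, 0 ≤ s → h (ρ s) = h x - s := by
    intro s hs
    have hA : Tendsto (fun n => dist (ρ s) (w n) - dist (w n) p) (U:Filter ℕ) (𝓝 (h (ρ s))) :=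
      (hconv (ρ s)).mono_left hU
    have herr : Tendsto (fun n => dist (ρ s) (ρn n s)) (U:Filter ℕ) (𝓝 0) := by
      have h1 := Tendsto.dist (tendsto_const_nhds : Tendsto (fun _ : ℕ => ρ s) (U:Filter ℕ) (𝓝 (ρ s))) (hρlim s)
      simpa using h1
    have hev : ∀ᶠ n in (U:Filter ℕ), dist (ρn n s) (w n) = dist x (w n) - s := by
      filter_upwards [(hwx.eventually_ge_atTop s).filter_mono hU] with n hn
      have hn' : s ≤ dist x (w n) := by rwa [dist_comm]
      have h1 := hρiso n s (dist x (w n)) hs hn' dist_nonneg le_rfl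
      rw [hρend n] at h1
      rw [h1, abs_of_nonpos (by linarith)]; ring
    have hmain : Tendsto (fun n => dist (ρn n s) (w n) - dist (w n) p) (U:Filter ℕ) (𝓝 (h x - s)) := by
      have h1 : Tendsto (fun n => (dist x (w n) - dist (w n) p) - s) (U:Filter ℕ) (𝓝 (h x - s)) :=
        ((hconv x).mono_left hU).sub_const s
      refine Tendsto.congr' ?_ h1
      filter_upwards [hev] with n hn
      rw [hn]; ring
    have hdn : ∀ᶠ n in (U:Filter ℕ), (dist (ρn n s) (w n) - dist (w n) p) - dist (ρ s) (ρn n s) ≤ dist (ρ s) (w n) - dist (w n) p := by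
      filter_upwards with n
      have h1 := dist_triangle (ρn n s) (ρ s) (w n)
      have h2 : dist (ρn n s) (ρ s) = dist (ρ s) (ρn n s) := dist_comm _ _
      linarith
    have hup : ∀ᶠ n in (U:Filter ℕ), dist (ρ s) (w n) - dist (w n) p ≤ (dist (ρn n s) (w n) - dist (w n) p) + dist (ρ s) (ρn n s) := by
      filter_upwards with n
      have h1 := dist_triangle (ρ s) (ρn n s) (w n)
      linarith
    have hsq : Tendsto (fun n => dist (ρ s) (w n) - dist (w n) p) (U:Filter ℕ) (𝓝 (h x - s)) := by
      have hlo := hmain.sub herr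
      have hhi := hmain.add herr
      rw [sub_zero] at hlo
      rw [add_zero] at hhi
      exact tendsto_of_tendsto_of_tendsto_of_le_of_le' hlo hhi hdn hup
    exact tendsto_nhds_unique hA hsq
  have hasym : ∀ t : ℝ, 0 ≤ t → dist (γ t) (ρ t) ≤ dist p x + 4 * δ := by
    intro t ht
    have hdd : Tendsto (fun n => dist (σ n t) (ρn n t)) (U:Filter ℕ) (𝓝 (dist (γ t) (ρ t))) :=
      (hγlim t).dist (hρlim t)
    refine le_of_tendsto hdd ?_
    filter_upwards [(hw.eventually_ge_atTop t).filter_mono hU,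
      (hwx.eventually_ge_atTop t).filter_mono hU] with n h1 h2
    have hdn : t ≤ dist p (w n) := by rwa [dist_comm]
    have hen : t ≤ dist x (w n) := by rwa [dist_comm]
    have e1 : dist (σ n t) (w n) = dist p (w n) - t := by
      have h' := hσiso n t (dist p (w n)) ht hdn dist_nonneg le_rfl
      rw [hσend n] at h'
      rw [h', abs_of_nonpos (by linarith)]; ring
    have e2 : dist (σ n t) p = t := by
      have h' := hσiso n t 0 ht hdn le_rfl dist_nonneg
      rw [hσ0 n] at h'
      rw [h', sub_zero, abs_of_nonneg ht]
    have e3 : dist (ρn n t) (w n) = dist x (w n) - t := by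
      have h' := hρiso n t (dist x (w n)) ht hen dist_nonneg le_rfl
      rw [hρend n] at h'
      rw [h', abs_of_nonpos (by linarith)]; ring
    have e4 : dist (ρn n t) x = t := by
      have h' := hρiso n t 0 ht hen le_rfl dist_nonneg
      rw [hρ0 n] at h'
      rw [h', sub_zero, abs_of_nonneg ht]
    have G1 := hhyp (w n) (σ n t) (ρn n t) p
    have G2 := hhyp (w n) p (ρn n t) x
    have p1 : gromovProduct (w n) (σ n t) p = dist p (w n) - t := by
      simp only [gromovProduct]
      rw [e1, e2]; ring
    have p2 : gromovProduct (w n) x (ρn n t) = dist x (w n) - t := by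
      simp only [gromovProduct]
      rw [e3, dist_comm x (ρn n t), e4]; ring
    have p3 : gromovProduct (w n) p x = (dist p (w n) + dist x (w n) - dist p x)/2 := by
      simp only [gromovProduct]
    have tri1 : dist x (w n) ≤ dist p x + dist p (w n) := by
      have h' := dist_triangle x p (w n)
      have h'' : dist x p = dist p x := dist_comm _ _
      linarith
    have tri2 : dist p (w n) ≤ dist p x + dist x (w n) := dist_triangle p x (w n)
    have hB : (dist p (w n) + dist x (w n) - 2*t - dist p x)/2 - δ ≤ gromovProduct (w n) p (ρn n t) := by
      refine le_trans ?_ G2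
      rw [p2, p3]
      have hm : (dist p (w n) + dist x (w n) - 2*t - dist p x)/2 ≤
          min ((dist p (w n) + dist x (w n) - dist p x)/2) (dist x (w n) - t) :=
        le_min (by linarith) (by linarith)
      linarith
    have hmin : (dist p (w n) + dist x (w n) - 2*t - dist p x)/2 - δ ≤
        min (gromovProduct (w n) (σ n t) p) (gromovProduct (w n) p (ρn n t)) := by
      refine le_min ?_ hB
      rw [p1]
      linarith
    have hG : (dist p (w n) + dist x (w n) - 2*t - dist p x)/2 - 2*δ ≤
        gromovProduct (w n) (σ n t) (ρn n t) := by
      linarith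
    have final : gromovProduct (w n) (σ n t) (ρn n t) =
        (dist (σ n t) (w n) + dist (ρn n t) (w n) - dist (σ n t) (ρn n t))/2 := rfl
    rw [e1, e3] at final
    linarith
  obtain ⟨T, S, hT, hS, htend⟩ := happ γ ρ hγray hρray ⟨dist p x + 4*δ, hasym⟩
  have hx_eq : h x = S - T := by
    have key : ∀ ε : ℝ, 0 < ε → |h x - (S - T)| ≤ ε := by
      intro ε hε
      obtain ⟨t, ht0, htε⟩ : ∃ t : ℝ, 0 ≤ t ∧ dist (γ (t+T)) (ρ (t+S)) < ε := by
        have h1 : ∀ᶠ t in atTop, dist (γ (t+T)) (ρ (t+S)) < ε := by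
          have := htend.eventually (gt_mem_nhds hε)
          simpa using this
        exact ((eventually_ge_atTop (0:ℝ)).and h1).exists
      have e1 : h (γ (t+T)) = -(t+T) := hγh _ (by linarith)
      have e2 : h (ρ (t+S)) = h x - (t+S) := hρh _ (by linarith)
      have e3 : |h (γ (t+T)) - h (ρ (t+S))| ≤ dist (γ (t+T)) (ρ (t+S)) := by
        rw [abs_sub_le_iff]
        constructor
        · have h' := hLip (γ (t+T)) (ρ (t+S))
          linarith
        · have h' := hLip (ρ (t+S)) (γ (t+T))
          rw [dist_comm (ρ (t+S)) (γ (t+T))] at h'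
          linarith
      rw [e1, e2] at e3
      have e4 : |(-(t+T)) - (h x - (t+S))| = |h x - (S - T)| := by
        rw [show (-(t+T)) - (h x - (t+S)) = -(h x - (S - T)) by ring, abs_neg]
      rw [e4] at e3
      linarith
    have h0 : |h x - (S - T)| = 0 := by
      by_contra hne
      have hpos : 0 < |h x - (S - T)| := lt_of_le_of_ne (abs_nonneg _) (Ne.symm hne)
      have := key (|h x - (S - T)|/2) (by linarith)
      linarith
    have := abs_eq_zero.mp h0
    linarith
  have hE : Tendsto (fun u : ℝ => dist (γ u) (ρ (u - T + S))) atTop (𝓝 0) := by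
    have hcomp : Tendsto (fun u : ℝ => u - T) atTop atTop :=
      tendsto_atTop_add_const_right atTop (-T) tendsto_id
    have h1 := htend.comp hcomp
    refine h1.congr fun u => ?_
    simp only [Function.comp, sub_add_cancel]
  have hupper : ∀ᶠ u in atTop, dist x (γ u) - dist (γ u) p ≤ h x + dist (γ u) (ρ (u - T + S)) := by
    filter_upwards [eventually_ge_atTop (max T 0)] with u hu
    have hu0 : 0 ≤ u := le_trans (le_max_right T 0) hu
    have huT : T ≤ u := le_trans (le_max_left T 0) hu
    have h1 : dist x (ρ (u - T + S)) = u - T + S := hxρ _ (by linarith)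
    have h2 := dist_triangle x (ρ (u - T + S)) (γ u)
    rw [h1] at h2
    have h3 : dist (γ u) p = u := hγp u hu0
    have hc : dist (ρ (u - T + S)) (γ u) = dist (γ u) (ρ (u - T + S)) := dist_comm _ _
    rw [h3, hx_eq]
    linarith
  have hlower : ∀ᶠ u in atTop, h x ≤ dist x (γ u) - dist (γ u) p := by
    filter_upwards [eventually_ge_atTop (0:ℝ)] with u hu
    have h1 := hlow x u hu
    rw [hγp u hu]
    exact h1
  have hhi : Tendsto (fun u : ℝ => h x + dist (γ u) (ρ (u - T + S))) atTop (𝓝 (h x)) := by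
    have h1 := Tendsto.add (tendsto_const_nhds : Tendsto (fun _ : ℝ => h x) atTop (𝓝 (h x))) hE
    simpa using h1
  exact tendsto_of_tendsto_of_tendsto_of_le_of_le' tendsto_const_nhds hhi hlower hupper
end

section
/- Let (X,d) be a proper geodesic metric space which is δ-hyperbolic for some δ ≥ 0. Let γ : [0,∞) → X be a geodesic ray and let σ : [0,∞) → X be a (1,B) quasi-geodesic ray for some B ≥ 0, i.e. |t−s| − B ≤ d(σ(t),σ(s)) ≤ |t−s| + B for all s,t ≥ 0. Assume that σ(t) converges to the boundary point of γ, in the sense that (σ(t) | γ(s))_{γ(0)} → ∞ as s,t → ∞ (for every C > 0 there is T such that (σ(t)|γ(s))_{γ(0)} ≥ C whenever s,t ≥ T). Then there exists M > 0 such that d(γ(t), σ(t)) < M for all t ≥ 0. -/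
open Filter Metric Topology

lemma gromovProduct_nonneg {X : Type*} [MetricSpace X] (p x y : X) :
    0 ≤ gromovProduct p x y := by
  unfold gromovProduct
  have h1 := dist_triangle x p y
  have h2 := dist_comm p y
  linarith

lemma gromovProduct_le_dist {X : Type*} [MetricSpace X] (p x y : X) :
    gromovProduct p x y ≤ dist x p := by
  unfold gromovProduct
  have h1 := dist_triangle y x p
  have h2 := dist_comm y x
  linarith

/-- In a proper geodesic δ-hyperbolic space, a (1,B) quasi-geodesic
ray σ converging to the boundary point of a geodesic ray γ stays at bounded
distance from γ: there is M > 0 with d(γ t, σ t) < M for all t ≥ 0. -/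
theorem quasigeodesic_shadows_geodesic {X : Type*} [MetricSpace X] [ProperSpace X]
    (hX : IsGeodesicSpace X)
    (δ : ℝ) (hδ : 0 ≤ δ) (hhyp : IsDeltaHyperbolic X δ)
    (γ σ : ℝ → X) (hγ : IsGeodesicRay γ) (B : ℝ) (hB : 0 ≤ B)
    (hσ : ∀ s t : ℝ, 0 ≤ s → 0 ≤ t →
      |t - s| - B ≤ dist (σ t) (σ s) ∧ dist (σ t) (σ s) ≤ |t - s| + B)
    (hconv : ∀ C > (0 : ℝ), ∃ T : ℝ, ∀ s t : ℝ, T ≤ s → T ≤ t →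
      C ≤ gromovProduct (γ 0) (σ t) (γ s)) :
    ∃ M > (0 : ℝ), ∀ t : ℝ, 0 ≤ t → dist (γ t) (σ t) < M := by
  have ha0 : (0:ℝ) ≤ dist (σ 0) (γ 0) := dist_nonneg
  -- distance from σ u to the basepoint is about u
  have hA : ∀ u : ℝ, 0 ≤ u →
      u - B - dist (σ 0) (γ 0) ≤ dist (σ u) (γ 0) ∧
      dist (σ u) (γ 0) ≤ u + B + dist (σ 0) (γ 0) := by
    intro u hu
    obtain ⟨h1, h2⟩ := hσ 0 u le_rfl hu
    rw [sub_zero, abs_of_nonneg hu] at h1 h2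
    have t1 := dist_triangle (σ u) (σ 0) (γ 0)
    have t2 := dist_triangle (σ u) (γ 0) (σ 0)
    have c1 := dist_comm (γ 0) (σ 0)
    constructor <;> linarith
  refine ⟨dist (σ 0) (γ 0) * 3 + 4 * B + 4 * δ + 1, by linarith, ?_⟩
  intro t ht
  obtain ⟨hAt1, hAt2⟩ := hA t ht
  have hD0 : (0:ℝ) ≤ dist (σ t) (γ 0) := dist_nonneg
  obtain ⟨T, hT⟩ := hconv (dist (σ t) (γ 0) + 1) (by linarith)
  set t' := max T t with ht'def
  set s := max T (dist (σ t) (γ 0)) with hsdef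
  have htt' : t ≤ t' := le_max_right _ _
  have ht'0 : 0 ≤ t' := le_trans ht htt'
  have hsD : dist (σ t) (γ 0) ≤ s := le_max_right _ _
  have hs0 : 0 ≤ s := le_trans hD0 hsD
  obtain ⟨hA'1, hA'2⟩ := hA t' ht'0
  -- lower bound on (σ t | σ t')
  obtain ⟨hd1, hd2⟩ := hσ t t' ht ht'0
  rw [abs_of_nonneg (by linarith : (0:ℝ) ≤ t' - t)] at hd1 hd2
  have h1 : dist (σ t) (γ 0) - (dist (σ 0) (γ 0) + 3 * B / 2) ≤
      gromovProduct (γ 0) (σ t) (σ t') := by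
    unfold gromovProduct
    have c := dist_comm (σ t) (σ t')
    linarith
  -- convergence gives a lower bound on (σ t' | γ s)
  have h2 : dist (σ t) (γ 0) + 1 ≤ gromovProduct (γ 0) (σ t') (γ s) :=
    hT s t' (le_max_left _ _) (le_max_left _ _)
  -- hyperbolicity: lower bound on g := (σ t | γ s)
  have h3 := hhyp (γ 0) (σ t) (γ s) (σ t')
  set g := gromovProduct (γ 0) (σ t) (γ s) with hgdef
  have hglb : dist (σ t) (γ 0) - (dist (σ 0) (γ 0) + 3 * B / 2) - δ ≤ g := by
    have hmin : dist (σ t) (γ 0) - (dist (σ 0) (γ 0) + 3 * B / 2) ≤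
        min (gromovProduct (γ 0) (σ t) (σ t')) (gromovProduct (γ 0) (σ t') (γ s)) :=
      le_min h1 (by linarith)
    linarith
  have hg0 : 0 ≤ g := gromovProduct_nonneg _ _ _
  have hgD : g ≤ dist (σ t) (γ 0) := gromovProduct_le_dist _ _ _
  have hgs : g ≤ s := le_trans hgD hsD
  -- the Gromov product of two points on the ray
  have heq : gromovProduct (γ 0) (γ s) (γ g) = g := by
    unfold gromovProduct
    rw [hγ s 0 hs0 le_rfl, hγ g 0 hg0 le_rfl, hγ s g hs0 hg0,
      sub_zero, sub_zero, abs_of_nonneg hs0, abs_of_nonneg hg0,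
      abs_of_nonneg (by linarith : (0:ℝ) ≤ s - g)]
    ring
  -- hyperbolicity again: σ t is close to γ g
  have h7 := hhyp (γ 0) (σ t) (γ g) (γ s)
  rw [heq, ← hgdef, min_self] at h7
  have h8 : dist (σ t) (γ g) ≤ dist (σ t) (γ 0) - g + 2 * δ := by
    unfold gromovProduct at h7
    rw [hγ g 0 hg0 le_rfl, sub_zero, abs_of_nonneg hg0] at h7
    linarith
  -- transfer along the ray from γ g to γ t
  have h9 : dist (γ t) (γ g) ≤
      dist (σ 0) (γ 0) * 2 + 5 * B / 2 + δ := by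
    rw [hγ t g ht hg0]
    rw [abs_le]
    constructor <;> linarith
  have htri := dist_triangle (γ t) (γ g) (σ t)
  have hc := dist_comm (γ g) (σ t)
  linarith
end

section
/- Let (X,d) be a metric space, γ : [0,∞) → X a geodesic ray, p ∈ X, and R > 0. Let (x_n) be a sequence with d(x_n,p) → ∞ such that for each n there exists t_n ≥ 0 with d(x_n, γ(t_n)) < R (i.e. x_n lies in the geodesic region A(γ,R)). Then B_γ(x_n, p) → −∞ as n → ∞. -/
open Filter Metric Topology

/-- If (x_n) lies in the geodesic region A(γ,R) and d(x_n,p) → ∞,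
then B_γ(x_n, p) → -∞. -/
theorem busemann_tendsto_atBot_in_geodesicRegion {X : Type*} [MetricSpace X]
    (γ : ℝ → X) (hγ : IsGeodesicRay γ) (p : X) (R : ℝ) (hR : 0 < R)
    (x : ℕ → X) (hx : Tendsto (fun n => dist (x n) p) atTop atTop)
    (t : ℕ → ℝ) (ht : ∀ n, 0 ≤ t n) (hxt : ∀ n, dist (x n) (γ (t n)) < R)
    (Bγ : X → ℝ)
    (hBγ : ∀ z : X, Tendsto (fun τ => dist z (γ τ) - dist (γ τ) p) atTop (nhds (Bγ z))) :
    Tendsto (fun n => Bγ (x n)) atTop atBot := by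
  set C := dist (γ 0) p with hC
  have key : ∀ n, Bγ (x n) ≤ R + C - t n := by
    intro n
    have hlim := hBγ (x n)
    have hev : ∀ᶠ τ in atTop,
        dist (x n) (γ τ) - dist (γ τ) p ≤ dist (x n) (γ (t n)) - t n + C := by
      filter_upwards [eventually_ge_atTop (max (t n) 0)] with τ hτ
      have hτ0 : (0:ℝ) ≤ τ := le_trans (le_max_right _ _) hτ
      have hτt : t n ≤ τ := le_trans (le_max_left _ _) hτ
      have hd1 : dist (γ (t n)) (γ τ) = τ - t n := by
        rw [hγ (t n) τ (ht n) hτ0, abs_of_nonpos (by linarith)]; ring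
      have h1 : dist (x n) (γ τ) ≤ dist (x n) (γ (t n)) + (τ - t n) := by
        have := dist_triangle (x n) (γ (t n)) (γ τ)
        linarith
      have hd0 : dist (γ 0) (γ τ) = τ := by
        rw [hγ 0 τ le_rfl hτ0, zero_sub, abs_neg, abs_of_nonneg hτ0]
      have h2 : τ - C ≤ dist (γ τ) p := by
        have h := dist_triangle (γ 0) p (γ τ)
        rw [dist_comm p (γ τ)] at h
        linarith
      linarith
    have hle : Bγ (x n) ≤ dist (x n) (γ (t n)) - t n + C :=
      le_of_tendsto hlim hev
    have := hxt n
    linarith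
  have htn : ∀ n, dist (x n) p - R - C ≤ t n := by
    intro n
    have h1 := dist_triangle (x n) (γ (t n)) p
    have h2 := dist_triangle (γ (t n)) (γ 0) p
    have hd : dist (γ (t n)) (γ 0) = t n := by
      rw [hγ (t n) 0 (ht n) le_rfl, sub_zero, abs_of_nonneg (ht n)]
    have := hxt n
    linarith
  have hbound : ∀ n, Bγ (x n) ≤ 2*R + 2*C + -dist (x n) p := by
    intro n
    have := key n
    have := htn n
    linarith
  have hmain : Tendsto (fun n => 2*R + 2*C + -dist (x n) p) atTop atBot :=
    tendsto_atBot_add_const_left _ _ (tendsto_neg_atBot_iff.mpr hx)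
  exact tendsto_atBot_mono hbound hmain
end

section
/- Let (X,d) be a proper metric space and f : X → X a non-expanding map. Let p ∈ X, A ∈ ℝ, and let (w_n) be a sequence in X such that: (1) for every x ∈ X, d(x,w_n) − d(w_n,p) converges to h_a(x); (2) for every x ∈ X, d(x,f(w_n)) − d(f(w_n),p) converges to h_b(x); (3) d(p,w_n) − d(p,f(w_n)) → A. Then h_b(f(z)) ≤ h_a(z) + A for every z ∈ X. -/
open Filter Metric Topology

/-- weak Julia lemma: if w_n → a, f(w_n) → b in the horofunction
sense and d(p,w_n) - d(p,f(w_n)) → A, then h_b ∘ f ≤ h_a + A. -/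
theorem weak_julia {X : Type*} [MetricSpace X] [ProperSpace X]
    (f : X → X) (hf : ∀ x y : X, dist (f x) (f y) ≤ dist x y)
    (p : X) (A : ℝ) (w : ℕ → X) (ha hb : X → ℝ)
    (h1 : ∀ x : X, Tendsto (fun n => dist x (w n) - dist (w n) p) atTop (nhds (ha x)))
    (h2 : ∀ x : X, Tendsto (fun n => dist x (f (w n)) - dist (f (w n)) p) atTop (nhds (hb x)))
    (h3 : Tendsto (fun n => dist p (w n) - dist p (f (w n))) atTop (nhds A)) :
    ∀ z : X, hb (f z) ≤ ha z + A := by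
  intro z
  have key : Tendsto (fun n => (dist z (w n) - dist (w n) p) +
      (dist p (w n) - dist p (f (w n)))) atTop (nhds (ha z + A)) :=
    (h1 z).add h3
  refine le_of_tendsto_of_tendsto (h2 (f z)) key (Eventually.of_forall fun n => ?_)
  have := hf z (w n)
  simp only [dist_comm p]
  linarith [hf z (w n)]
end

section
/- Let (X,d) be a proper geodesic metric space which is δ-hyperbolic for some δ ≥ 0, and let f : X → X be a non-expanding map. Let x ∈ X and suppose d(x, f^n(x))/n → c with c > 0. Then: (1) for all n,m ≥ 0, c·|n−m| ≤ d(f^n(x), f^m(x)) ≤ d(x,f(x))·|n−m|, so the forward orbit (f^n(x)) is a discrete quasi-geodesic ray; (2) there exist a geodesic ray σ : [0,∞) → X and R > 0 such that for every n ≥ 0 there is t ≥ 0 with d(f^n(x), σ(t)) < R, i.e. the forward orbit is contained in a geodesic region. -/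
open Filter Metric Topology

section FOQGsection
open Set

namespace FOQG

lemma abs_min_sub_min (a b c : ℝ) : |min a c - min b c| ≤ |a - b| := by
  rw [abs_sub_le_iff]
  constructor <;>
  · rcases le_total a c with h1 | h1 <;> rcases le_total b c with h2 | h2 <;>
      simp only [min_eq_left, min_eq_right, h1, h2] <;>
      linarith [le_abs_self (a-b), neg_abs_le (a-b), abs_nonneg (a-b)]

lemma abs_clamp_sub_clamp (a b B : ℝ) :
    |max 0 (min a B) - max 0 (min b B)| ≤ |a - b| := by
  have h := abs_min_sub_min a b B
  rw [abs_sub_le_iff] at h ⊢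
  constructor <;>
  · rcases le_total (0:ℝ) (min a B) with h1 | h1 <;> rcases le_total (0:ℝ) (min b B) with h2 | h2 <;>
      simp only [max_eq_right, max_eq_left, h1, h2] <;>
      linarith [h.1, h.2, abs_nonneg (a-b)]

lemma nat_two_mul (n : ℕ) : 2*n + 1 ≤ 2 * 2^n := by
  induction n with
  | zero => norm_num
  | succ n ih =>
    have : (2:ℕ) ≤ 2 * 2^n := by
      have : (1:ℕ) ≤ 2^n := Nat.one_le_two_pow
      omega
    calc 2*(n+1) + 1 = (2*n+1) + 2 := by ring
    _ ≤ 2*2^n + 2*2^n := by omega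
    _ = 2 * 2^(n+1) := by ring

lemma nat_sq_le (n : ℕ) : n^2 ≤ 2 * 2^n := by
  induction n with
  | zero => norm_num
  | succ n ih =>
    have h2 := nat_two_mul n
    calc (n+1)^2 = n^2 + (2*n+1) := by ring
    _ ≤ 2*2^n + 2*2^n := by omega
    _ = 2 * 2^(n+1) := by ring

variable {X : Type*} [MetricSpace X]

lemma gp_comm (p a b : X) : gromovProduct p a b = gromovProduct p b a := by
  unfold gromovProduct; rw [dist_comm a b]; ring

lemma gp_nonneg (p a b : X) : 0 ≤ gromovProduct p a b := by
  unfold gromovProduct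
  have := dist_triangle a p b
  have := dist_comm p b
  nlinarith [dist_triangle a p b, dist_comm p b]

lemma chainGP {δ : ℝ} (hδ : 0 ≤ δ) (hhyp : IsDeltaHyperbolic X δ) :
    ∀ N : ℕ, ∀ k : ℕ, 1 ≤ k → k ≤ 2^N → ∀ (p : X) (y : ℕ → X) (μ : ℝ),
    (∀ i < k, μ ≤ gromovProduct p (y i) (y (i+1))) →
    μ - N * δ ≤ gromovProduct p (y 0) (y k) := by
  intro N
  induction N with
  | zero =>
    intro k hk1 hk2 p y μ hstep
    interval_cases k
    simpa using hstep 0 (by norm_num)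
  | succ N ih =>
    intro k hk1 hk2 p y μ hstep
    rcases eq_or_lt_of_le hk1 with h1 | h2
    · have := hstep 0 (by omega)
      rw [← h1]
      have : (0:ℝ) ≤ (N+1 : ℕ) * δ := by positivity
      push_cast at this ⊢
      have h0 := hstep 0 (by omega)
      linarith
    · -- k ≥ 2
      set k₁ := k / 2 with hk₁
      have hk₁1 : 1 ≤ k₁ := Nat.one_le_div_iff (by norm_num) |>.mpr (by omega)
      have hk₁N : k₁ ≤ 2^N := by
        have : k ≤ 2^(N+1) := hk2
        have : k / 2 ≤ 2^(N+1) / 2 := Nat.div_le_div_right this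
        simpa [pow_succ, Nat.mul_div_cancel_left] using this
      have hk₂1 : 1 ≤ k - k₁ := by omega
      have hk₂N : k - k₁ ≤ 2^N := by omega
      have hA := ih k₁ hk₁1 hk₁N p y μ (fun i hi => hstep i (by omega))
      have hB := ih (k - k₁) hk₂1 hk₂N p (fun i => y (k₁ + i)) μ
        (fun i hi => by
          have := hstep (k₁ + i) (by omega)
          simpa [Nat.add_assoc] using this)
      have hBk : k₁ + (k - k₁) = k := by omega
      rw [hBk] at hB
      have := hhyp p (y 0) (y k) (y k₁)
      have hcast : ((N+1 : ℕ) : ℝ) * δ = (N:ℝ)*δ + δ := by push_cast; ring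
      rw [hcast]
      have hmin : μ - N*δ ≤ min (gromovProduct p (y 0) (y k₁)) (gromovProduct p (y k₁) (y k)) :=
        le_min hA hB
      linarith [min_le_left (gromovProduct p (y 0) (y k₁)) (gromovProduct p (y k₁) (y k))]


lemma seg_gp {δ D r : ℝ} (hδ : 0 ≤ δ) (hhyp : IsDeltaHyperbolic X δ) (hD : 0 < D)
    (w p q : X) (σ : ℝ → X) (hσ0 : σ 0 = p) (hσL : σ (dist p q) = q)
    (hiso : ∀ s ∈ Icc (0:ℝ) (dist p q), ∀ t ∈ Icc (0:ℝ) (dist p q), dist (σ s) (σ t) = |s - t|)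
    (hfar : ∀ u ∈ Icc (0:ℝ) (dist p q), r ≤ dist w (σ u))
    (N : ℕ) (hN : max (⌈dist p q / D⌉₊) 1 ≤ 2^N) :
    r - D/2 - N*δ ≤ gromovProduct w p q := by
  set L := dist p q with hL
  have hL0 : 0 ≤ L := dist_nonneg
  set k := max (⌈L / D⌉₊) 1 with hk
  set y : ℕ → X := fun i => σ (min ((i:ℝ)*D) L) with hy
  have hmem : ∀ i : ℕ, min ((i:ℝ)*D) L ∈ Icc (0:ℝ) L := by
    intro i
    constructor
    · exact le_min (by positivity) hL0
    · exact min_le_right _ _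
  have hy0 : y 0 = p := by simp [hy, min_eq_left hL0, hσ0]
  have hyk : y k = q := by
    have hkD : L ≤ (k:ℝ)*D := by
      have h1 : L/D ≤ (⌈L/D⌉₊ : ℝ) := Nat.le_ceil _
      have h2 : ((⌈L/D⌉₊:ℕ):ℝ) ≤ (k:ℝ) := by exact_mod_cast Nat.cast_le.mpr (le_max_left _ _)
      have := (div_le_iff₀ hD).mp (h1.trans h2)
      linarith
    simp only [hy, min_eq_right hkD, hσL]
  have hchain := chainGP hδ hhyp N k (le_max_right _ _) hN w y (r - D/2) ?_
  · rw [hy0, hyk] at hchain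
    linarith
  · intro i hi
    have h1 : r ≤ dist w (y i) := hfar _ (hmem i)
    have h2 : r ≤ dist w (y (i+1)) := hfar _ (hmem (i+1))
    have h3 : dist (y i) (y (i+1)) ≤ D := by
      have := hiso _ (hmem i) _ (hmem (i+1))
      rw [hy]
      simp only
      rw [hiso _ (hmem i) _ (hmem (i+1))]
      calc |min ((i:ℝ)*D) L - min (((i+1:ℕ):ℝ)*D) L| ≤ |(i:ℝ)*D - ((i+1:ℕ):ℝ)*D| :=
        abs_min_sub_min _ _ _
      _ = D := by push_cast; rw [abs_of_nonpos (by nlinarith)]; ring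
    unfold gromovProduct
    rw [dist_comm (y i) w, dist_comm (y (i+1)) w]
    linarith

lemma orbit_gp {δ D r : ℝ} (hδ : 0 ≤ δ) (hhyp : IsDeltaHyperbolic X δ) (hD : 0 ≤ D)
    (z : ℕ → X) (hup1 : ∀ u, dist (z u) (z (u+1)) ≤ D)
    (w : X) (m s j : ℕ) (hj : j ≤ m) (hsj : s ≤ j)
    (hfar : ∀ u ≤ m, r ≤ dist w (z u))
    (N : ℕ) (hN : max (j - s) 1 ≤ 2^N) :
    r - D/2 - N*δ ≤ gromovProduct w (z s) (z j) := by
  set k := max (j - s) 1 with hk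
  set y : ℕ → X := fun i => z (min (s+i) j) with hy
  have hy0 : y 0 = z s := by simp [hy, min_eq_left hsj]
  have hyk : y k = z j := by
    have : j ≤ s + k := by omega
    simp [hy, min_eq_right this]
  have hchain := chainGP hδ hhyp N k (le_max_right _ _) hN w y (r - D/2) ?_
  · rw [hy0, hyk] at hchain
    linarith
  · intro i hi
    have hmlt : min (s+i) j ≤ m := le_trans (min_le_right _ _) hj
    have hmlt2 : min (s+i+1) j ≤ m := le_trans (min_le_right _ _) hj
    have h1 : r ≤ dist w (y i) := hfar _ hmlt
    have h2 : r ≤ dist w (y (i+1)) := by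
      have := hfar _ hmlt2
      simpa [hy, Nat.add_assoc] using this
    have h3 : dist (y i) (y (i+1)) ≤ D := by
      rcases Nat.lt_or_ge (s+i) j with h | h
      · have e1 : min (s+i) j = s+i := by omega
        have e2 : min (s+(i+1)) j = s+i+1 := by omega
        simp only [hy, e1, e2]
        exact hup1 (s+i)
      · have e1 : min (s+i) j = j := by omega
        have e2 : min (s+(i+1)) j = j := by omega
        simp only [hy, e1, e2, dist_self]
        exact hD
    unfold gromovProduct
    rw [dist_comm (y i) w, dist_comm (y (i+1)) w]
    linarith


noncomputable def R0 (c D δ : ℝ) : ℝ :=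
  max (max D 1) (max (D/2 + 2*δ) (4*δ^2*(112/c + 32)))

set_option maxHeartbeats 1000000 in
lemma geodesic_near_chain (hX : IsGeodesicSpace X) {δ c D : ℝ}
    (hδ : 1 ≤ δ) (hhyp : IsDeltaHyperbolic X δ) (hc : 0 < c) (hcD : c ≤ D)
    (z : ℕ → X)
    (hlow : ∀ n m : ℕ, c * |(n:ℝ) - (m:ℝ)| ≤ dist (z n) (z m))
    (hup : ∀ n m : ℕ, dist (z n) (z m) ≤ D * |(n:ℝ) - (m:ℝ)|)
    (m : ℕ) (γ : ℝ → X)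
    (hγ0 : γ 0 = z 0) (hγL : γ (dist (z 0) (z m)) = z m)
    (hiso : ∀ s ∈ Icc (0:ℝ) (dist (z 0) (z m)), ∀ t ∈ Icc (0:ℝ) (dist (z 0) (z m)),
      dist (γ s) (γ t) = |s - t|) :
    ∀ t ∈ Icc (0:ℝ) (dist (z 0) (z m)), ∃ u ≤ m, dist (γ t) (z u) ≤ R0 c D δ := by
  classical
  have hδ0 : 0 ≤ δ := by linarith
  have hD0 : 0 < D := lt_of_lt_of_le hc hcD
  set L := dist (z 0) (z m) with hL
  have hL0 : 0 ≤ L := dist_nonneg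
  set S : Set X := ↑((Finset.range (m+1)).image z) with hS
  have hSmem : ∀ u, u ≤ m → z u ∈ S := by
    intro u hu
    simp only [hS, Finset.coe_image, Finset.coe_range]
    exact Set.mem_image_of_mem z (by simp; omega)
  have hSne : S.Nonempty := ⟨z 0, hSmem 0 (Nat.zero_le _)⟩
  have hScomp : IsCompact S := (Finset.image z _).finite_toSet.isCompact
  have hSidx : ∀ p ∈ S, ∃ u ≤ m, p = z u := by
    intro p hp
    simp only [hS, Finset.coe_image, Finset.coe_range, Set.mem_image] at hp
    obtain ⟨u, hu, rfl⟩ := hp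
    exact ⟨u, by simp at hu; omega, rfl⟩
  have hcont : ContinuousOn γ (Icc 0 L) := by
    rw [Metric.continuousOn_iff]
    intro b hb ε hε
    exact ⟨ε, hε, fun a ha hab => by rw [hiso a ha b hb, ← Real.dist_eq]; exact hab⟩
  obtain ⟨t₀, ht₀mem, ht₀max⟩ := isCompact_Icc.exists_isMaxOn (nonempty_Icc.mpr hL0)
    ((continuous_infDist_pt S).comp_continuousOn hcont)
  set w₀ := γ t₀ with hw₀
  clear_value w₀
  set r := infDist w₀ S with hr
  have hr0 : 0 ≤ r := by rw [hr]; exact infDist_nonneg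
  have hrmax : ∀ t ∈ Icc (0:ℝ) L, infDist (γ t) S ≤ r := by
    intro t ht
    have h := ht₀max ht
    simp only [Function.comp_apply] at h
    rw [hr, hw₀]
    exact h
  have hrfar : ∀ u, u ≤ m → r ≤ dist w₀ (z u) := by
    intro u hu
    rw [hr]
    exact infDist_le_dist_of_mem (hSmem u hu)
  have hexmin : ∀ t ∈ Icc (0:ℝ) L, ∃ u ≤ m, dist (γ t) (z u) ≤ r := by
    intro t ht
    obtain ⟨p, hpS, hpd⟩ := hScomp.exists_infDist_eq_dist hSne (γ t)
    obtain ⟨u, hu, rfl⟩ := hSidx p hpS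
    exact ⟨u, hu, by rw [← hpd]; exact hrmax t ht⟩
  clear_value L S
  -- main claim
  have hclaim : r ≤ R0 c D δ := by
    by_contra hcon
    push_neg at hcon
    have hrD : D < r := lt_of_le_of_lt (le_max_of_le_left (le_max_left _ _)) hcon
    have hr1 : (1:ℝ) < r := lt_of_le_of_lt (le_max_of_le_left (le_max_right _ _)) hcon
    have hrδ : D/2 + 2*δ < r := lt_of_le_of_lt (le_max_of_le_right (le_max_left _ _)) hcon
    have hrbig : 4*δ^2*(112/c + 32) < r := lt_of_le_of_lt (le_max_of_le_right (le_max_right _ _)) hcon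
    have hr0' : (0:ℝ) < r := by linarith
    clear_value r
    set a' := max (t₀ - 2*r) 0 with ha'
    set b' := min (t₀ + 2*r) L with hb'
    clear_value a' b'
    have ht₀0 : 0 ≤ t₀ := ht₀mem.1
    have ht₀L : t₀ ≤ L := ht₀mem.2
    have ha'mem : a' ∈ Icc (0:ℝ) L := by
      rw [ha']; exact ⟨le_max_right _ _, max_le (by linarith) hL0⟩
    have hb'mem : b' ∈ Icc (0:ℝ) L := by
      rw [hb']; exact ⟨le_min (by linarith) hL0, min_le_right _ _⟩
    have ha't₀ : a' ≤ t₀ := by rw [ha']; exact max_le (by linarith) ht₀0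
    have ht₀b' : t₀ ≤ b' := by rw [hb']; exact le_min (by linarith) ht₀L
    have ha'ge : t₀ - 2*r ≤ a' := by rw [ha']; exact le_max_left _ _
    have hb'le : b' ≤ t₀ + 2*r := by rw [hb']; exact min_le_left _ _
    have ha'ge2 : a' = max (t₀ - 2*r) 0 := ha'
    have hb'le2 : b' = min (t₀ + 2*r) L := hb'
    set p' := γ a' with hp'
    set q' := γ b' with hq'
    clear_value p' q'
    have hwp : dist w₀ p' = t₀ - a' := by
      rw [hw₀, hp', hiso t₀ ht₀mem a' ha'mem, abs_of_nonneg (by linarith)]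
    have hwq : dist w₀ q' = b' - t₀ := by
      rw [hw₀, hq', hiso t₀ ht₀mem b' hb'mem, abs_of_nonpos (by linarith)]; ring
    have hpq : dist p' q' = b' - a' := by
      rw [hp', hq', hiso a' ha'mem b' hb'mem, abs_of_nonpos (by linarith)]; ring
    have hgp0 : gromovProduct w₀ p' q' = 0 := by
      unfold gromovProduct
      rw [dist_comm p' w₀, dist_comm q' w₀, hwp, hwq, hpq]; ring
    obtain ⟨s, hsm, hd₁r, hps⟩ :
        ∃ s ≤ m, dist p' (z s) ≤ r ∧ r + dist p' (z s) ≤ dist w₀ p' := by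
      rcases le_or_gt 0 (t₀ - 2*r) with h | h
      · obtain ⟨u, hu, hd⟩ := hexmin a' ha'mem
        rw [← hp'] at hd
        have haeq : a' = t₀ - 2*r := by rw [ha'ge2]; exact max_eq_left h
        exact ⟨u, hu, hd, by rw [hwp, haeq]; linarith⟩
      · have haeq : a' = 0 := by rw [ha'ge2]; exact max_eq_right (le_of_lt h)
        have hpz : p' = z 0 := by rw [hp', haeq, hγ0]
        refine ⟨0, Nat.zero_le _, by rw [hpz, dist_self]; linarith, ?_⟩
        rw [hpz, dist_self]
        have := hrfar 0 (Nat.zero_le _)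
        linarith
    obtain ⟨j, hjm, hd₃r, hqs⟩ :
        ∃ j ≤ m, dist q' (z j) ≤ r ∧ r + dist q' (z j) ≤ dist w₀ q' := by
      rcases le_or_gt (t₀ + 2*r) L with h | h
      · obtain ⟨u, hu, hd⟩ := hexmin b' hb'mem
        rw [← hq'] at hd
        have hbeq : b' = t₀ + 2*r := by rw [hb'le2]; exact min_eq_left h
        exact ⟨u, hu, hd, by rw [hwq, hbeq]; linarith⟩
      · have hbeq : b' = L := by rw [hb'le2]; exact min_eq_right (le_of_lt h)
        have hqz : q' = z m := by rw [hq', hbeq, hγL]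
        refine ⟨m, le_refl _, by rw [hqz, dist_self]; linarith, ?_⟩
        rw [hqz, dist_self]
        have := hrfar m (le_refl _)
        linarith
    have hsj6 : dist (z s) (z j) ≤ 6*r := by
      have := dist_triangle4 (z s) p' q' (z j)
      rw [dist_comm (z s) p', hpq] at this
      have h4 : dist (z j) q' = dist q' (z j) := dist_comm _ _
      linarith [dist_comm (z j) q', hd₁r, hd₃r, ha'ge, hb'le]
    have hsjidx : |(s:ℝ) - (j:ℝ)| ≤ 6*r/c := by
      have h1 := le_trans (hlow s j) hsj6
      rw [le_div_iff₀ hc]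
      nlinarith [h1]
    set B := 6*r/c + r/D + 2 with hB
    clear_value B
    have hrc : 0 ≤ 6*r/c := by positivity
    have hrd : 0 ≤ r/D := by positivity
    have hB2 : 2 ≤ B := by rw [hB]; linarith
    have hPex : ∃ N : ℕ, B ≤ (2:ℝ)^N := by
      obtain ⟨N₀, hN₀⟩ := pow_unbounded_of_one_lt B (by norm_num : (1:ℝ) < 2)
      exact ⟨N₀, le_of_lt hN₀⟩
    classical
    set N := Nat.find hPex with hN
    have hNle : B ≤ (2:ℝ)^N := Nat.find_spec hPex
    have hN1 : 1 ≤ N := by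
      by_contra h
      have : N = 0 := by omega
      rw [this] at hNle
      norm_num at hNle
      linarith
    have hNmin : ¬ B ≤ (2:ℝ)^(N-1) := Nat.find_min hPex (by omega)
    have h2N : (2:ℝ)^(N-1) < B := lt_of_not_ge hNmin
    clear_value N
    -- three Gromov product bounds
    set μ := r - D/2 - (N:ℝ)*δ with hμ
    clear_value μ
    have hcastpow : ((2^N : ℕ):ℝ) = (2:ℝ)^N := by push_cast; ring
    have hone_pow : (1:ℝ) ≤ (2:ℝ)^N := by linarith
    -- segment bound
    have hseg : ∀ (P Q : X), dist P Q ≤ r → r + dist P Q ≤ dist w₀ P →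
        μ ≤ gromovProduct w₀ P Q := by
      intro P Q hPQ hwP
      obtain ⟨σ₁, hσ₁0, hσ₁L, hσ₁iso⟩ := hX P Q
      have hfar : ∀ u ∈ Icc (0:ℝ) (dist P Q), r ≤ dist w₀ (σ₁ u) := by
        intro u hu
        have h1 : dist P (σ₁ u) = u := by
          conv_lhs => rw [← hσ₁0]
          rw [hσ₁iso 0 ⟨le_refl _, dist_nonneg⟩ u hu, abs_of_nonpos (by linarith [hu.1])]
          ring
        have h2 := dist_triangle w₀ (σ₁ u) P
        rw [dist_comm (σ₁ u) P, h1] at h2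
        linarith [hu.2]
      have hcount : max (⌈dist P Q / D⌉₊) 1 ≤ 2^N := by
        have hcast : ((max (⌈dist P Q / D⌉₊) 1 : ℕ):ℝ) ≤ ((2^N : ℕ):ℝ) := by
          rw [Nat.cast_max, hcastpow]
          push_cast
          apply max_le _ hone_pow
          have hc1 : (⌈dist P Q / D⌉₊:ℝ) < dist P Q / D + 1 :=
            Nat.ceil_lt_add_one (by positivity)
          have hc2 : dist P Q / D ≤ r / D := (div_le_div_iff_of_pos_right hD0).mpr hPQ
          linarith [hNle]
        exact_mod_cast hcast
      have := seg_gp hδ0 hhyp hD0 w₀ P Q σ₁ hσ₁0 hσ₁L hσ₁iso hfar N hcount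
      rw [hμ]; linarith
    have hup1 : ∀ u : ℕ, dist (z u) (z (u+1)) ≤ D := by
      intro u
      have h := hup u (u+1)
      have hab : |(u:ℝ) - ((u+1:ℕ):ℝ)| = 1 := by
        push_cast
        rw [show (u:ℝ) - ((u:ℝ)+1) = -1 by ring]
        norm_num
      rw [hab, mul_one] at h
      exact h
    -- orbit bound
    have horb : μ ≤ gromovProduct w₀ (z s) (z j) := by
      have hk2 : ∀ (s' j' : ℕ), s' ≤ j' → j' ≤ m → ((j' - s' : ℕ):ℝ) ≤ 6*r/c →
          μ ≤ gromovProduct w₀ (z s') (z j') := by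
        intro s' j' hsj hj'm hidx
        have hcount : max (j' - s') 1 ≤ 2^N := by
          have hcast : ((max (j' - s') 1 : ℕ):ℝ) ≤ ((2^N : ℕ):ℝ) := by
            rw [Nat.cast_max, hcastpow]
            push_cast
            apply max_le _ hone_pow
            linarith [hNle]
          exact_mod_cast hcast
        have := orbit_gp hδ0 hhyp (le_of_lt hD0) z hup1 w₀ m s' j' hj'm hsj hrfar N hcount
        rw [hμ]; linarith
      rcases le_total s j with h | h
      · apply hk2 s j h hjm
        rw [Nat.cast_sub h]
        calc (j:ℝ) - s ≤ |(s:ℝ) - j| := by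
              rw [abs_sub_comm]; exact le_abs_self _
        _ ≤ 6*r/c := hsjidx
      · rw [gp_comm]
        apply hk2 j s h hsm
        rw [Nat.cast_sub h]
        calc (s:ℝ) - j ≤ |(s:ℝ) - j| := le_abs_self _
        _ ≤ 6*r/c := hsjidx
    -- gluing
    have h1 : μ ≤ gromovProduct w₀ p' (z s) := hseg p' (z s) hd₁r hps
    have h3 : μ ≤ gromovProduct w₀ q' (z j) := hseg q' (z j) hd₃r hqs
    have h3' : μ ≤ gromovProduct w₀ (z j) q' := by rw [gp_comm]; exact h3
    have g1 := hhyp w₀ p' (z j) (z s)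
    have g2 := hhyp w₀ p' q' (z j)
    rw [hgp0] at g2
    have hmin1 := le_min h1 horb
    have e1 : μ - δ ≤ gromovProduct w₀ p' (z j) := by linarith
    have hmin2 := le_min e1 (by linarith [h3'] : μ - δ ≤ gromovProduct w₀ (z j) q')
    have hμδ : μ - 2*δ ≤ 0 := by linarith
    -- numeric contradiction
    have hNr : r - D/2 ≤ ((N:ℝ)+2)*δ := by rw [hμ] at hμδ; linarith
    have hra : r ≤ 2*δ*((N:ℝ)+2) := by linarith [hNr, hrD]
    have hδpos : (0:ℝ) < δ := by linarith
    have hδsq : (0:ℝ) < δ^2 := pow_pos hδpos 2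
    have hsqN : (((N:ℝ))+2)^2 ≤ 2*(2:ℝ)^(N+2) := by
      exact_mod_cast nat_sq_le (N+2)
    have hpow : (2:ℝ)^(N+2) = 8*(2:ℝ)^(N-1) := by
      have hNe : N + 2 = (N-1) + 3 := by omega
      rw [hNe, pow_add]; ring
    have hb : ((N:ℝ)+2)^2 < 16*B := by
      rw [hpow] at hsqN
      linarith [h2N]
    have hr2 : r*r ≤ (2*δ*((N:ℝ)+2))*(2*δ*((N:ℝ)+2)) :=
      mul_self_le_mul_self (le_of_lt hr0') hra
    have hBle : B ≤ 7*r/c + 2*r := by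
      rw [hB]
      have hdc : r/D ≤ r/c := by
        rw [div_le_div_iff₀ hD0 hc]
        exact mul_le_mul_of_nonneg_left hcD hr0
      have h7 : 6*r/c + r/c = 7*r/c := by ring
      linarith
    have e2 : r*r ≤ 4*δ^2*(((N:ℝ)+2)^2) := by
      calc r*r ≤ (2*δ*((N:ℝ)+2))*(2*δ*((N:ℝ)+2)) := hr2
      _ = 4*δ^2*(((N:ℝ)+2)^2) := by ring
    have e3 : 4*δ^2*(((N:ℝ)+2)^2) < 4*δ^2*(16*B) := by
      apply mul_lt_mul_of_pos_left hb
      linarith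
    have e4 : 4*δ^2*(16*B) ≤ 4*δ^2*(16*(7*r/c + 2*r)) := by
      apply mul_le_mul_of_nonneg_left _ (by linarith : (0:ℝ) ≤ 4*δ^2)
      linarith
    have e5 : 4*δ^2*(16*(7*r/c + 2*r)) = (4*δ^2*(112/c + 32))*r := by
      ring
    have hfin : r*r < (4*δ^2*(112/c + 32))*r := by
      rw [← e5]
      linarith
    have := lt_of_mul_lt_mul_right hfin hr0
    linarith
  -- conclusion
  intro t ht
  obtain ⟨u, hu, hd⟩ := hexmin t ht
  exact ⟨u, hu, le_trans hd hclaim⟩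


noncomputable def R1 (c D δ : ℝ) : ℝ := D*(2*(R0 c D δ)+1)/c + R0 c D δ

set_option maxHeartbeats 1000000 in
lemma chain_near_geodesic (hX : IsGeodesicSpace X) {δ c D : ℝ}
    (hδ : 1 ≤ δ) (hhyp : IsDeltaHyperbolic X δ) (hc : 0 < c) (hcD : c ≤ D)
    (z : ℕ → X)
    (hlow : ∀ n m : ℕ, c * |(n:ℝ) - (m:ℝ)| ≤ dist (z n) (z m))
    (hup : ∀ n m : ℕ, dist (z n) (z m) ≤ D * |(n:ℝ) - (m:ℝ)|)
    (m : ℕ) (γ : ℝ → X)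
    (hγ0 : γ 0 = z 0) (hγL : γ (dist (z 0) (z m)) = z m)
    (hiso : ∀ s ∈ Icc (0:ℝ) (dist (z 0) (z m)), ∀ t ∈ Icc (0:ℝ) (dist (z 0) (z m)),
      dist (γ s) (γ t) = |s - t|)
    (n : ℕ) (hn : n ≤ m) :
    ∃ t ∈ Icc (0:ℝ) (dist (z 0) (z m)), dist (z n) (γ t) ≤ R1 c D δ := by
  classical
  have hD0 : 0 < D := lt_of_lt_of_le hc hcD
  have hnear := geodesic_near_chain hX hδ hhyp hc hcD z hlow hup m γ hγ0 hγL hiso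
  set L := dist (z 0) (z m) with hL
  have hL0 : 0 ≤ L := dist_nonneg
  set R := R0 c D δ with hR
  have hR1 : 1 ≤ R := le_trans (le_max_right D 1) (le_max_left _ _)
  have hRD : D ≤ R := le_trans (le_max_left D 1) (le_max_left _ _)
  have hR1eq : R1 c D δ = D*(2*R+1)/c + R := by rw [R1, ← hR]
  clear_value L R
  have hR0 : 0 ≤ R := by linarith
  have htu : ∀ u : ℕ, min (u:ℝ) L ∈ Icc (0:ℝ) L :=
    fun u => ⟨le_min (Nat.cast_nonneg u) hL0, min_le_right _ _⟩
  choose ι hι1 hι2 using fun u : ℕ => hnear (min (u:ℝ) L) (htu u)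
  have hDidx : ∀ a b : ℕ, (a:ℝ) ≤ b → dist (z a) (z b) ≤ D * ((b:ℝ) - a) := by
    intro a b hab
    have h := hup a b
    rw [abs_sub_comm, abs_of_nonneg (by linarith)] at h
    exact h
  have hcidx : ∀ a b : ℕ, c * ((b:ℝ) - (a:ℝ)) ≤ dist (z a) (z b) := by
    intro a b
    calc c * ((b:ℝ) - a) ≤ c * |(a:ℝ) - b| := by
          rw [abs_sub_comm]
          exact mul_le_mul_of_nonneg_left (le_abs_self _) (le_of_lt hc)
    _ ≤ _ := hlow a b
  by_cases hex : ∃ u : ℕ, n ≤ ι u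
  · set u₀ := Nat.find hex with hu₀
    have hfind : n ≤ ι u₀ := Nat.find_spec hex
    have hmin : ∀ v, v < u₀ → ι v < n := by
      intro v hv
      have := Nat.find_min hex hv
      omega
    clear_value u₀
    have hbound : ((ι u₀:ℝ) - n) * c ≤ 2*R+1 := by
      rcases Nat.eq_zero_or_pos u₀ with h0 | h0
      · subst h0
        have h2 := hι2 0
        rw [show min ((0:ℕ):ℝ) L = 0 by simp [min_eq_left hL0], hγ0] at h2
        have hA := le_trans (hcidx 0 (ι 0)) h2
        have hcn : 0 ≤ c * (n:ℝ) := mul_nonneg (le_of_lt hc) (Nat.cast_nonneg n)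
        push_cast at hA
        nlinarith [hR0]
      · set v := u₀ - 1 with hv
        have hvlt : v < u₀ := by omega
        have hivn : ι v < n := hmin v hvlt
        have h2a := hι2 v
        have h2b := hι2 u₀
        have hmid : dist (γ (min (v:ℝ) L)) (γ (min (u₀:ℝ) L)) ≤ 1 := by
          rw [hiso _ (htu v) _ (htu u₀)]
          have h5 := abs_min_sub_min (v:ℝ) (u₀:ℝ) L
          have hvcast : (v:ℝ) = (u₀:ℝ) - 1 := by
            rw [hv]
            push_cast [Nat.cast_sub h0]
            ring
          rw [hvcast] at h5 ⊢
          calc |min ((u₀:ℝ)-1) L - min (u₀:ℝ) L| ≤ |(u₀:ℝ)-1 - u₀| := h5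
          _ = 1 := by rw [show (u₀:ℝ)-1-u₀ = -1 by ring]; norm_num
        have htri : dist (z (ι v)) (z (ι u₀)) ≤ 2*R + 1 := by
          have h6 := dist_triangle4 (z (ι v)) (γ (min (v:ℝ) L)) (γ (min (u₀:ℝ) L)) (z (ι u₀))
          rw [dist_comm (z (ι v)) (γ (min (v:ℝ) L))] at h6
          linarith [h2a, h2b, hmid]
        have h7 := le_trans (hcidx (ι v) (ι u₀)) htri
        have h8 : ((ι v:ℝ) + 1) ≤ (n:ℝ) := by exact_mod_cast hivn
        have h9 : c * ((ι v:ℝ) + 1) ≤ c * (n:ℝ) :=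
          mul_le_mul_of_nonneg_left h8 (le_of_lt hc)
        nlinarith
    refine ⟨min (u₀:ℝ) L, htu u₀, ?_⟩
    have hstep1 : dist (z n) (z (ι u₀)) ≤ D * ((ι u₀:ℝ) - n) :=
      hDidx n (ι u₀) (by exact_mod_cast hfind)
    have hstep2 : dist (z (ι u₀)) (γ (min (u₀:ℝ) L)) ≤ R := by
      rw [dist_comm]; exact hι2 u₀
    have hstep3 : D * ((ι u₀:ℝ) - n) ≤ D * ((2*R+1)/c) := by
      apply mul_le_mul_of_nonneg_left _ (le_of_lt hD0)
      rw [le_div_iff₀ hc]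
      exact hbound
    calc dist (z n) (γ (min (u₀:ℝ) L))
        ≤ dist (z n) (z (ι u₀)) + dist (z (ι u₀)) (γ (min (u₀:ℝ) L)) := dist_triangle _ _ _
    _ ≤ D * ((2*R+1)/c) + R := by linarith
    _ = D * (2*R+1)/c + R := by rw [mul_div_assoc]
    _ = R1 c D δ := hR1eq.symm
  · push_neg at hex
    set K := ⌈L⌉₊ with hK
    have htK : min ((K:ℕ):ℝ) L = L := min_eq_right (by rw [hK]; exact Nat.le_ceil L)
    have h2 := hι2 K
    rw [htK, hγL, dist_comm] at h2
    have hcm := le_trans (hcidx (ι K) m) h2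
    have hKn : ι K < n := hex K
    have h8 : ((ι K:ℝ) + 1) ≤ (n:ℝ) := by exact_mod_cast hKn
    have hmn : ((m:ℝ) - n) ≤ R/c := by
      rw [le_div_iff₀ hc]
      have h9 : c * ((ι K:ℝ) + 1) ≤ c * (n:ℝ) :=
        mul_le_mul_of_nonneg_left h8 (le_of_lt hc)
      nlinarith
    refine ⟨L, ⟨hL0, le_refl L⟩, ?_⟩
    rw [hγL]
    have hstep1 : dist (z n) (z m) ≤ D * ((m:ℝ) - n) :=
      hDidx n m (by exact_mod_cast hn)
    have hstep3 : D * ((m:ℝ) - n) ≤ D * (R/c) :=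
      mul_le_mul_of_nonneg_left hmn (le_of_lt hD0)
    have hpos : 0 ≤ D*(R+1)/c := by positivity
    have hsplit : D*(2*R+1)/c = D*R/c + D*(R+1)/c := by ring
    have : D * (R/c) = D*R/c := by ring
    rw [hR1eq]
    linarith

end FOQG

open FOQG

set_option maxHeartbeats 2000000 in
/-- if the divergence rate c of a non-expanding map f is positive,
then every forward orbit is a discrete quasi-geodesic ray and is contained in a
geodesic region around some geodesic ray. -/
theorem forward_orbit_quasigeodesic {X : Type*} [MetricSpace X] [ProperSpace X]
    (hX : IsGeodesicSpace X)
    (δ : ℝ) (hδ : 0 ≤ δ) (hhyp : IsDeltaHyperbolic X δ)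
    (f : X → X) (hf : ∀ a b : X, dist (f a) (f b) ≤ dist a b)
    (x : X) (c : ℝ) (hc : 0 < c)
    (hrate : Tendsto (fun n : ℕ => dist x (f^[n] x) / n) atTop (nhds c)) :
    (∀ n m : ℕ, c * |(n : ℝ) - (m : ℝ)| ≤ dist (f^[n] x) (f^[m] x) ∧
      dist (f^[n] x) (f^[m] x) ≤ dist x (f x) * |(n : ℝ) - (m : ℝ)|) ∧
    (∃ σ : ℝ → X, IsGeodesicRay σ ∧
      ∃ R > (0 : ℝ), ∀ n : ℕ, ∃ t : ℝ, 0 ≤ t ∧ dist (f^[n] x) (σ t) < R) := by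
  classical
  set z : ℕ → X := fun n => f^[n] x with hz
  set D := dist x (f x) with hD
  have hz0 : z 0 = x := by rw [hz]; simp
  have hz1 : z 1 = f x := by rw [hz]; simp
  -- iterates are non-expanding
  have hit : ∀ (k : ℕ) (a b : X), dist (f^[k] a) (f^[k] b) ≤ dist a b := by
    intro k
    induction k with
    | zero => intro a b; simp
    | succ k ih =>
      intro a b
      rw [Function.iterate_succ_apply, Function.iterate_succ_apply]
      exact le_trans (ih (f a) (f b)) (hf a b)
  -- upper bound
  have hup2 : ∀ n k : ℕ, dist (z n) (z (n+k)) ≤ D * k := by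
    intro n k
    induction k with
    | zero => simp
    | succ k ih =>
      have hstep : dist (z (n+k)) (z (n+k+1)) ≤ D := by
        show dist (f^[n+k] x) (f^[n+k+1] x) ≤ D
        rw [Function.iterate_succ_apply f (n+k) x]
        exact hit (n+k) x (f x)
      calc dist (z n) (z (n+k+1))
          ≤ dist (z n) (z (n+k)) + dist (z (n+k)) (z (n+k+1)) := dist_triangle _ _ _
      _ ≤ D*k + D := by push_cast at ih ⊢; linarith
      _ = D*((k:ℝ)+1) := by ring
      _ = D*((k+1:ℕ):ℝ) := by push_cast; ring
  have hup : ∀ n m : ℕ, dist (z n) (z m) ≤ D * |(n:ℝ) - (m:ℝ)| := by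
    have haux : ∀ n k : ℕ, dist (z n) (z (n+k)) ≤ D * |(n:ℝ) - ((n+k:ℕ):ℝ)| := by
      intro n k
      have h := hup2 n k
      have : |(n:ℝ) - ((n+k:ℕ):ℝ)| = (k:ℝ) := by
        push_cast
        rw [show (n:ℝ) - ((n:ℝ)+k) = -(k:ℝ) by ring, abs_neg, abs_of_nonneg (Nat.cast_nonneg k)]
      rw [this]
      exact h
    intro n m
    rcases le_total n m with h | h
    · obtain ⟨k, rfl⟩ : ∃ k, m = n + k := ⟨m - n, by omega⟩
      exact haux n k
    · obtain ⟨k, rfl⟩ : ∃ k, n = m + k := ⟨n - m, by omega⟩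
      rw [dist_comm, abs_sub_comm]
      exact haux m k
  -- pointwise rate for all basepoints
  have hy2 : ∀ y : X, Tendsto (fun j : ℕ => dist y (f^[j] y) / j) atTop (nhds c) := by
    intro y
    have hcomp : ∀ j : ℕ, |dist y (f^[j] y) - dist x (f^[j] x)| ≤ 2 * dist x y := by
      intro j
      rw [abs_sub_le_iff]
      have hxy := dist_comm x y
      constructor
      · have h1 := dist_triangle4 y x (f^[j] x) (f^[j] y)
        have h2 := hit j x y
        linarith
      · have h1 := dist_triangle4 x y (f^[j] y) (f^[j] x)
        have h2 := hit j y x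
        have h3 := dist_comm y x
        linarith
    have hg : Tendsto (fun j : ℕ => (dist x (f^[j] x) - 2*dist x y) / j) atTop (nhds c) := by
      have h := hrate.sub (tendsto_const_div_atTop_nhds_zero_nat (2*dist x y))
      rw [sub_zero] at h
      refine h.congr fun j => ?_
      rw [sub_div]
    have hh : Tendsto (fun j : ℕ => (dist x (f^[j] x) + 2*dist x y) / j) atTop (nhds c) := by
      have h := hrate.add (tendsto_const_div_atTop_nhds_zero_nat (2*dist x y))
      rw [add_zero] at h
      refine h.congr fun j => ?_
      rw [add_div]
    refine tendsto_of_tendsto_of_tendsto_of_le_of_le' hg hh ?_ ?_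
    · filter_upwards [Ici_mem_atTop 1] with j hj
      have hj0 : (0:ℝ) < j := by exact_mod_cast Nat.lt_of_lt_of_le Nat.zero_lt_one hj
      rw [div_le_div_iff₀ hj0 hj0]
      have := hcomp j
      rw [abs_le] at this
      nlinarith [this.1, this.2]
    · filter_upwards [Ici_mem_atTop 1] with j hj
      have hj0 : (0:ℝ) < j := by exact_mod_cast Nat.lt_of_lt_of_le Nat.zero_lt_one hj
      rw [div_le_div_iff₀ hj0 hj0]
      have := hcomp j
      rw [abs_le] at this
      nlinarith [this.1, this.2]
  -- lower bound
  have hlow2 : ∀ n k : ℕ, c * k ≤ dist (z n) (z (n+k)) := by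
    intro n k
    rcases Nat.eq_zero_or_pos k with rfl | hk
    · simp only [Nat.cast_zero, mul_zero, Nat.add_zero]
      exact dist_nonneg
    set y := z n with hy
    have hzk : z (n+k) = f^[k] y := by
      rw [hy, hz]
      show f^[n+k] x = f^[k] (f^[n] x)
      rw [add_comm, Function.iterate_add_apply]
    have hg1 : ∀ j : ℕ, dist y (f^[k*j] y) ≤ j * dist y (f^[k] y) := by
      intro j
      induction j with
      | zero => simp
      | succ j ih =>
        have he : f^[k*(j+1)] y = f^[k*j] (f^[k] y) := by
          rw [show k*(j+1) = k*j + k by ring, Function.iterate_add_apply]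
        calc dist y (f^[k*(j+1)] y)
            ≤ dist y (f^[k*j] y) + dist (f^[k*j] y) (f^[k*(j+1)] y) := dist_triangle _ _ _
        _ ≤ j * dist y (f^[k] y) + dist y (f^[k] y) := by
            rw [he]
            have := hit (k*j) y (f^[k] y)
            linarith
        _ = ((j+1:ℕ):ℝ) * dist y (f^[k] y) := by push_cast; ring
    have hmul : Tendsto (fun j : ℕ => k*j) atTop atTop :=
      tendsto_atTop_mono (fun j => Nat.le_mul_of_pos_left j hk) tendsto_id
    have hcompo := (hy2 y).comp hmul
    have htend : Tendsto (fun j : ℕ => dist y (f^[k*j] y) / (j:ℝ)) atTop (nhds (c*k)) := by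
      have h := hcompo.mul_const (k:ℝ)
      refine h.congr fun j => ?_
      show dist y (f^[k*j] y) / ((k*j:ℕ):ℝ) * (k:ℝ) = dist y (f^[k*j] y) / (j:ℝ)
      rcases Nat.eq_zero_or_pos j with rfl | hj
      · simp
      · push_cast
        rw [div_mul_eq_mul_div, mul_comm (dist y (f^[k*j] y)) (k:ℝ), mul_div_mul_left]
        exact ne_of_gt (by exact_mod_cast hk)
    have hbound : ∀ᶠ j in (atTop : Filter ℕ), dist y (f^[k*j] y) / (j:ℝ) ≤ dist y (f^[k] y) := by
      filter_upwards [Ici_mem_atTop 1] with j hj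
      have hj0 : (0:ℝ) < j := by exact_mod_cast Nat.lt_of_lt_of_le Nat.zero_lt_one hj
      rw [div_le_iff₀ hj0]
      calc dist y (f^[k*j] y) ≤ j * dist y (f^[k] y) := hg1 j
      _ = dist y (f^[k] y) * j := by ring
    have := le_of_tendsto htend hbound
    rw [hzk]
    exact this
  have hlow : ∀ n m : ℕ, c * |(n:ℝ) - (m:ℝ)| ≤ dist (z n) (z m) := by
    have haux : ∀ n k : ℕ, c * |(n:ℝ) - ((n+k:ℕ):ℝ)| ≤ dist (z n) (z (n+k)) := by
      intro n k
      have h := hlow2 n k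
      have he : |(n:ℝ) - ((n+k:ℕ):ℝ)| = (k:ℝ) := by
        push_cast
        rw [show (n:ℝ) - ((n:ℝ)+k) = -(k:ℝ) by ring, abs_neg, abs_of_nonneg (Nat.cast_nonneg k)]
      rw [he]
      exact h
    intro n m
    rcases le_total n m with h | h
    · obtain ⟨k, rfl⟩ : ∃ k, m = n + k := ⟨m - n, by omega⟩
      exact haux n k
    · obtain ⟨k, rfl⟩ : ∃ k, n = m + k := ⟨n - m, by omega⟩
      rw [dist_comm, abs_sub_comm]
      exact haux m k
  have hcD : c ≤ D := by
    have := hlow2 0 1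
    rw [hz0] at this
    simp only [zero_add, hz1] at this
    push_cast at this
    rw [hD]
    linarith
  have hD0 : 0 < D := lt_of_lt_of_le hc hcD
  refine ⟨fun n m => ⟨hlow n m, hup n m⟩, ?_⟩
  -- Part 2
  have hδ'1 : (1:ℝ) ≤ δ + 1 := by linarith
  have hhyp' : IsDeltaHyperbolic X (δ+1) := by
    intro p a b q
    have := hhyp p a b q
    linarith
  choose Γ hΓ0 hΓL hΓiso using fun m : ℕ => hX x (z m)
  have hΓ0' : ∀ m, Γ m 0 = z 0 := fun m => by rw [hz0]; exact hΓ0 m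
  have hdz : ∀ m, dist (z 0) (z m) = dist x (z m) := fun m => by rw [hz0]
  have hΓL' : ∀ m, Γ m (dist (z 0) (z m)) = z m := fun m => by rw [hdz]; exact hΓL m
  have hΓiso' : ∀ m, ∀ s ∈ Icc (0:ℝ) (dist (z 0) (z m)), ∀ t ∈ Icc (0:ℝ) (dist (z 0) (z m)),
      dist (Γ m s) (Γ m t) = |s - t| := by
    intro m s hs t ht
    rw [hdz] at hs ht
    exact hΓiso m s hs t ht
  set R₁ := R1 c D (δ+1) with hR₁
  have hR₀1 : (1:ℝ) ≤ R0 c D (δ+1) := le_trans (le_max_right D 1) (le_max_left _ _)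
  have hR₁0 : 0 ≤ R₁ := by
    rw [hR₁, R1]
    have h1 : 0 ≤ D*(2*(R0 c D (δ+1))+1)/c := by
      apply div_nonneg _ (le_of_lt hc)
      nlinarith
    linarith
  have htrack : ∀ n m : ℕ, n ≤ m →
      ∃ t, t ∈ Icc (0:ℝ) (dist x (z m)) ∧ dist (z n) (Γ m t) ≤ R₁ := by
    intro n m hnm
    obtain ⟨t, ht1, ht2⟩ := chain_near_geodesic hX hδ'1 hhyp' hc hcD z hlow hup m (Γ m)
      (hΓ0' m) (hΓL' m) (hΓiso' m) n hnm
    rw [hdz] at ht1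
    exact ⟨t, ht1, ht2⟩
  obtain ⟨tf, htf0, htfm, htfR, htfz⟩ :
      ∃ tf : ℕ → ℕ → ℝ, (∀ n m : ℕ, 0 ≤ tf n m) ∧
        (∀ n m : ℕ, n ≤ m → tf n m ≤ dist x (z m)) ∧
        (∀ n m : ℕ, n ≤ m → dist (z n) (Γ m (tf n m)) ≤ R₁) ∧
        (∀ n m : ℕ, ¬ n ≤ m → tf n m = 0) := by
    refine ⟨fun n m => if h : n ≤ m then (htrack n m h).choose else 0, ?_, ?_, ?_, ?_⟩
    · intro n m
      by_cases h : n ≤ m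
      · simp only [dif_pos h]
        exact ((htrack n m h).choose_spec).1.1
      · simp only [dif_neg h]
        exact le_refl 0
    · intro n m h
      simp only [dif_pos h]
      exact ((htrack n m h).choose_spec).1.2
    · intro n m h
      simp only [dif_pos h]
      exact ((htrack n m h).choose_spec).2
    · intro n m h
      simp only [dif_neg h]
  -- clamped geodesics
  set gh : ℕ → ℝ → X := fun m t => Γ m (max 0 (min t (dist x (z m)))) with hgh
  have hdm0 : ∀ m : ℕ, (0:ℝ) ≤ dist x (z m) := fun m => dist_nonneg
  have hclamp_mem : ∀ (m:ℕ) (t:ℝ), max 0 (min t (dist x (z m))) ∈ Icc (0:ℝ) (dist x (z m)) :=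
    fun m t => ⟨le_max_left _ _, max_le (hdm0 m) (min_le_right _ _)⟩
  have hgh_lip : ∀ (m:ℕ) (s t : ℝ), dist (gh m s) (gh m t) ≤ |s - t| := by
    intro m s t
    rw [hgh]
    simp only
    rw [hΓiso m _ (hclamp_mem m s) _ (hclamp_mem m t)]
    exact abs_clamp_sub_clamp s t _
  have hgh_eq : ∀ (m:ℕ) (t:ℝ), 0 ≤ t → t ≤ dist x (z m) → gh m t = Γ m t := by
    intro m t h1 h2
    rw [hgh]
    simp only
    rw [min_eq_left h2, max_eq_right h1]
  have hGam : ∀ (m:ℕ) (u:ℝ), u ∈ Icc (0:ℝ) (dist x (z m)) → dist x (Γ m u) = u := by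
    intro m u hu
    have h := hΓiso m 0 ⟨le_refl 0, hdm0 m⟩ u hu
    rw [hΓ0 m, zero_sub, abs_neg, abs_of_nonneg hu.1] at h
    exact h
  have hgh_x : ∀ (m:ℕ) (t:ℝ), dist x (gh m t) ≤ |t| := by
    intro m t
    rw [hgh]
    simp only
    rw [hGam m _ (hclamp_mem m t)]
    exact max_le (abs_nonneg t) (le_trans (min_le_left _ _) (le_abs_self t))
  have htfub : ∀ n m : ℕ, tf n m ≤ dist x (z n) + R₁ := by
    intro n m
    by_cases h : n ≤ m
    · have h1 := htfm n m h
      have h2 := htfR n m h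
      have h3 : dist x (Γ m (tf n m)) = tf n m := hGam m _ ⟨htf0 n m, h1⟩
      have h4 := dist_triangle x (z n) (Γ m (tf n m))
      rw [h3] at h4
      linarith
    · rw [htfz n m h]
      have : (0:ℝ) ≤ dist x (z n) := dist_nonneg
      linarith
  -- compact product space
  haveI i1 : ∀ t : ℝ, CompactSpace (Metric.closedBall x |t| : Set X) :=
    fun t => isCompact_iff_compactSpace.mp (isCompact_closedBall x |t|)
  haveI i2 : ∀ n : ℕ, CompactSpace (Icc (0:ℝ) (dist x (z n) + R₁) : Set ℝ) :=
    fun n => isCompact_iff_compactSpace.mp isCompact_Icc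
  set F : ℕ → ((t : ℝ) → (Metric.closedBall x |t| : Set X)) ×
      ((n : ℕ) → (Icc (0:ℝ) (dist x (z n) + R₁) : Set ℝ)) := fun m =>
    (fun t => ⟨gh m t, by rw [Metric.mem_closedBall, dist_comm]; exact hgh_x m t⟩,
     fun n => ⟨tf n m, ⟨htf0 n m, htfub n m⟩⟩) with hF
  obtain ⟨q, hq⟩ := exists_clusterPt_of_compactSpace (Filter.map F atTop)
  set σ : ℝ → X := fun t => (q.1 t : X) with hσ
  set τ : ℕ → ℝ := fun n => (q.2 n : ℝ) with hτ
  have hfreq : ∀ (N : ℕ) (ε : ℝ), 0 < ε → ∀ (t₁ t₂ : ℝ) (n : ℕ),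
      ∃ m, N ≤ m ∧ dist (gh m t₁) (σ t₁) < ε ∧ dist (gh m t₂) (σ t₂) < ε ∧
        |tf n m - τ n| < ε := by
    intro N ε hε t₁ t₂ n
    have hc1 : Continuous fun p : ((t : ℝ) → (Metric.closedBall x |t| : Set X)) ×
        ((n : ℕ) → (Icc (0:ℝ) (dist x (z n) + R₁) : Set ℝ)) => (p.1 t₁ : X) :=
      continuous_subtype_val.comp ((continuous_apply t₁).comp continuous_fst)
    have hc2 : Continuous fun p : ((t : ℝ) → (Metric.closedBall x |t| : Set X)) ×
        ((n : ℕ) → (Icc (0:ℝ) (dist x (z n) + R₁) : Set ℝ)) => (p.1 t₂ : X) :=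
      continuous_subtype_val.comp ((continuous_apply t₂).comp continuous_fst)
    have hc3 : Continuous fun p : ((t : ℝ) → (Metric.closedBall x |t| : Set X)) ×
        ((n : ℕ) → (Icc (0:ℝ) (dist x (z n) + R₁) : Set ℝ)) => (p.2 n : ℝ) :=
      continuous_subtype_val.comp ((continuous_apply n).comp continuous_snd)
    obtain ⟨p, hpU, hpV⟩ := clusterPt_iff_nonempty.mp hq
      ((((Metric.isOpen_ball.preimage hc1).inter
        ((Metric.isOpen_ball.preimage hc2).inter (Metric.isOpen_ball.preimage hc3)))).mem_nhds
        ⟨Metric.mem_ball_self hε, Metric.mem_ball_self hε, Metric.mem_ball_self hε⟩)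
      (image_mem_map (Ici_mem_atTop N))
    obtain ⟨m, hm, rfl⟩ := hpV
    refine ⟨m, hm, ?_, ?_, ?_⟩
    · exact Metric.mem_ball.mp hpU.1
    · exact Metric.mem_ball.mp hpU.2.1
    · have h := Metric.mem_ball.mp hpU.2.2
      rw [Real.dist_eq] at h
      exact h
  have hblow : ∀ m : ℕ, c * (m:ℝ) ≤ dist x (z m) := by
    intro m
    have h := hlow 0 m
    rw [hz0] at h
    rw [show |((0:ℕ):ℝ) - (m:ℝ)| = (m:ℝ) by
      rw [Nat.cast_zero, zero_sub, abs_neg, abs_of_nonneg (Nat.cast_nonneg m)]] at h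
    exact h
  have hray : IsGeodesicRay σ := by
    intro s t hs ht
    have key : ∀ ε : ℝ, 0 < ε → abs (dist (σ s) (σ t) - |s - t|) ≤ 2*ε := by
      intro ε hε
      obtain ⟨m, hm, h1, h2, _⟩ := hfreq (⌈(max s t)/c⌉₊) ε hε s t 0
      have hLm : max s t ≤ dist x (z m) := by
        have h4 : (max s t)/c ≤ ((⌈(max s t)/c⌉₊:ℕ):ℝ) := Nat.le_ceil _
        have h3 : ((⌈(max s t)/c⌉₊:ℕ):ℝ) ≤ (m:ℝ) := Nat.cast_le.mpr hm
        have h6 : (max s t)/c ≤ (m:ℝ) := le_trans h4 h3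
        rw [div_le_iff₀ hc] at h6
        calc max s t ≤ (m:ℝ)*c := h6
        _ = c*(m:ℝ) := mul_comm _ _
        _ ≤ dist x (z m) := hblow m
      have hsL : s ≤ dist x (z m) := le_trans (le_max_left s t) hLm
      have htL : t ≤ dist x (z m) := le_trans (le_max_right s t) hLm
      have e3 : dist (gh m s) (gh m t) = |s - t| := by
        rw [hgh_eq m s hs hsL, hgh_eq m t ht htL]
        exact hΓiso m s ⟨hs, hsL⟩ t ⟨ht, htL⟩
      have t1 := dist_triangle4 (σ s) (gh m s) (gh m t) (σ t)
      have t2 := dist_triangle4 (gh m s) (σ s) (σ t) (gh m t)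
      rw [e3] at t1 t2
      rw [abs_sub_le_iff]
      constructor <;>
        linarith [dist_comm (σ s) (gh m s), dist_comm (σ t) (gh m t),
          dist_comm (gh m t) (σ t), dist_comm (gh m s) (σ s), h1, h2]
    have h0 : abs (dist (σ s) (σ t) - |s - t|) ≤ 0 := by
      by_contra hcon
      push_neg at hcon
      have := key (abs (dist (σ s) (σ t) - |s - t|)/3) (by linarith)
      linarith
    have h1 := abs_eq_zero.mp (le_antisymm h0 (abs_nonneg _))
    linarith [h1]
  refine ⟨σ, hray, R₁ + 1, by linarith, fun n => ?_⟩
  have hτmem := (q.2 n).2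
  refine ⟨τ n, hτmem.1, ?_⟩
  have hfar : ∀ ε : ℝ, 0 < ε → dist (z n) (σ (τ n)) ≤ R₁ + 2*ε := by
    intro ε hε
    obtain ⟨m, hm, h1, _, h3⟩ := hfreq n ε hε (τ n) (τ n) n
    have t2 : dist (Γ m (tf n m)) (gh m (τ n)) ≤ |tf n m - τ n| := by
      rw [← hgh_eq m _ (htf0 n m) (htfm n m hm)]
      exact hgh_lip m _ _
    have t1 := dist_triangle4 (z n) (Γ m (tf n m)) (gh m (τ n)) (σ (τ n))
    linarith [htfR n m hm]
  have hRfin : dist (z n) (σ (τ n)) ≤ R₁ := by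
    refine le_of_forall_pos_le_add fun ε hε => ?_
    have := hfar (ε/2) (by linarith)
    linarith
  show dist (z n) (σ (τ n)) < R₁ + 1
  linarith

end FOQGsection
end
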